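/- arXiv:2103.01377 — 4 statements merged into one kernel-verified Lean document; each statement's English description precedes it below -/
import Mathlib

section
/- For any composition k = (k_1,...,k_r), complex numbers x_1,...,x_r in the closed unit disk, and integers l ≥ 0, n ≥ 1, the shifted strict multiple harmonic sum Σ_{n ≥ n_1 > ... > n_r > 0} Π_{j=1}^r x_j^{n_j+l}/(n_j+l)^{k_j} equals (-1)^r Σ_{j=0}^r (-1)^j ζ_{n+l}(k_1,...,k_j; x_1,...,x_j) · ζ_l^⋆(k_r,...,k_{j+1}; x_r,...,x_{j+1}). -/
open Finset

/-- Multiple harmonic sum `ζ_m(k;x)`. -/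
noncomputable def mhs : ℕ → List (ℕ × ℂ) → ℂ
  | _, [] => 1
  | n, (k, x) :: rest => ∑ m ∈ Finset.Icc 1 n, x ^ m / (m : ℂ) ^ k * mhs (m - 1) rest

/-- Multiple harmonic star sum `ζ_m^⋆(k;x)`. -/
noncomputable def mhss : ℕ → List (ℕ × ℂ) → ℂ
  | _, [] => 1
  | n, (k, x) :: rest => ∑ m ∈ Finset.Icc 1 n, x ^ m / (m : ℂ) ^ k * mhss m rest

/-- Shifted strict multiple harmonic sum
`Σ_{n ≥ n_1 > ... > n_r ≥ 1} Π x_j^{n_j+l}/(n_j+l)^{k_j}`. -/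
noncomputable def mhsShift (l : ℕ) : ℕ → List (ℕ × ℂ) → ℂ
  | _, [] => 1
  | n, (k, x) :: rest =>
      ∑ m ∈ Finset.Icc 1 n, x ^ (m + l) / ((m + l : ℕ) : ℂ) ^ k * mhsShift l (m - 1) rest

lemma mhsShift_nil (l n : ℕ) : mhsShift l n [] = 1 := by simp [mhsShift]

lemma mhsShift_cons (l n k : ℕ) (x : ℂ) (rest : List (ℕ × ℂ)) :
    mhsShift l n ((k, x) :: rest) =
      ∑ m ∈ Finset.Icc 1 n, x ^ (m + l) / ((m + l : ℕ) : ℂ) ^ k * mhsShift l (m - 1) rest := by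
  simp [mhsShift]

lemma mhsShift_zero_cons (l k : ℕ) (x : ℂ) (rest : List (ℕ × ℂ)) :
    mhsShift l 0 ((k, x) :: rest) = 0 := by
  simp [mhsShift_cons]

lemma mhsShift_succ_top (l n k : ℕ) (x : ℂ) (rest : List (ℕ × ℂ)) :
    mhsShift l (n + 1) ((k, x) :: rest) =
      mhsShift l n ((k, x) :: rest)
        + x ^ (n + 1 + l) / ((n + 1 + l : ℕ) : ℂ) ^ k * mhsShift l n rest := by
  rw [mhsShift_cons, mhsShift_cons, Finset.sum_Icc_succ_top (by omega)]
  simp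

lemma mhsShift_append (q : List (ℕ × ℂ)) (k : ℕ) (x : ℂ) :
    ∀ l n : ℕ, mhsShift l n (q ++ [(k, x)]) =
      ∑ t ∈ Finset.Icc 1 n, x ^ (t + l) / ((t + l : ℕ) : ℂ) ^ k * mhsShift (l + t) (n - t) q := by
  induction q with
  | nil =>
      intro l n
      simp [mhsShift_cons, mhsShift_nil]
  | cons c q' ih =>
      obtain ⟨k', x'⟩ := c
      intro l n
      induction n with
      | zero => simp [mhsShift_zero_cons]
      | succ n ihn =>
          rw [List.cons_append, mhsShift_succ_top, ← List.cons_append, ihn, ih,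
            Finset.sum_Icc_succ_top (by omega : 1 ≤ n + 1)]
          rw [Nat.sub_self, mhsShift_zero_cons, mul_zero, add_zero, Finset.mul_sum,
            ← Finset.sum_add_distrib]
          apply Finset.sum_congr rfl
          intro t ht
          simp only [Finset.mem_Icc] at ht
          have h1 : n + 1 - t = (n - t) + 1 := by omega
          rw [h1, mhsShift_succ_top]
          have h2 : n - t + 1 + (l + t) = n + 1 + l := by omega
          rw [h2]
          ring

lemma mhs_eq_mhsShift (u : List (ℕ × ℂ)) : ∀ m : ℕ, mhs m u = mhsShift 0 m u := by
  induction u with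
  | nil => intro m; simp [mhs, mhsShift_nil]
  | cons c rest ih =>
      obtain ⟨k, x⟩ := c
      intro m
      rw [mhs, mhsShift_cons]
      apply Finset.sum_congr rfl
      intro m' _
      rw [ih]
      norm_num

lemma main_lemma (q : List (ℕ × ℂ)) : ∀ l n : ℕ,
    mhsShift l n q = (-1 : ℂ) ^ q.length * ∑ j ∈ Finset.range (q.length + 1),
      (-1 : ℂ) ^ j * mhs (n + l) (q.take j) * mhss l ((q.drop j).reverse) := by
  induction q using List.reverseRecOn with
  | nil => intro l n; simp [mhsShift_nil, mhs, mhss]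
  | append_singleton q a ih =>
      obtain ⟨k, x⟩ := a
      intro l n
      have hlen : (q ++ [(k, x)]).length = q.length + 1 := by simp
      rw [hlen, Finset.sum_range_succ]
      -- the j = q.length + 1 term
      have htake : (q ++ [(k, x)]).take (q.length + 1) = q ++ [(k, x)] := by
        apply List.take_of_length_le
        simp
      have hdrop : (q ++ [(k, x)]).drop (q.length + 1) = [] := by
        apply List.drop_eq_nil_of_le
        simp
      rw [htake, hdrop]
      -- rewrite the final mhs as a sum over the innermost index t
      have hB : mhs (n + l) (q ++ [(k, x)]) =
          ∑ t ∈ Finset.Icc 1 (n + l), x ^ t / (t : ℂ) ^ k * mhsShift t (n + l - t) q := by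
        rw [mhs_eq_mhsShift, mhsShift_append]
        apply Finset.sum_congr rfl
        intro t _
        norm_num
      -- rewrite the range sum
      have hA : ∑ j ∈ Finset.range (q.length + 1),
          (-1 : ℂ) ^ j * mhs (n + l) ((q ++ [(k, x)]).take j) *
            mhss l (((q ++ [(k, x)]).drop j).reverse) =
          (-1 : ℂ) ^ q.length *
            ∑ t ∈ Finset.Icc 1 l, x ^ t / (t : ℂ) ^ k * mhsShift t (n + l - t) q := by
        have step1 : ∀ j ∈ Finset.range (q.length + 1),
            (-1 : ℂ) ^ j * mhs (n + l) ((q ++ [(k, x)]).take j) *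
              mhss l (((q ++ [(k, x)]).drop j).reverse) =
            ∑ t ∈ Finset.Icc 1 l, x ^ t / (t : ℂ) ^ k *
              ((-1 : ℂ) ^ j * mhs (n + l) (q.take j) * mhss t ((q.drop j).reverse)) := by
          intro j hj
          simp only [Finset.mem_range] at hj
          have hj' : j ≤ q.length := by omega
          rw [List.take_append_of_le_length hj', List.drop_append_of_le_length hj',
            List.reverse_append, List.reverse_singleton, List.singleton_append, mhss,
            Finset.mul_sum]
          apply Finset.sum_congr rfl
          intro t _
          ring
        rw [Finset.sum_congr rfl step1, Finset.sum_comm, Finset.mul_sum]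
        apply Finset.sum_congr rfl
        intro t ht
        simp only [Finset.mem_Icc] at ht
        rw [← Finset.mul_sum]
        have hkey : ∑ j ∈ Finset.range (q.length + 1),
            (-1 : ℂ) ^ j * mhs (n + l) (q.take j) * mhss t ((q.drop j).reverse) =
            (-1 : ℂ) ^ q.length * mhsShift t (n + l - t) q := by
          have h := ih t (n + l - t)
          rw [Nat.sub_add_cancel (by omega : t ≤ n + l)] at h
          rw [h, ← mul_assoc, ← pow_add, Even.neg_one_pow ⟨q.length, rfl⟩, one_mul]
        rw [hkey]
        ring
      rw [hA]
      -- now purely scalar manipulation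
      have hpow : ((-1 : ℂ) ^ (q.length + 1)) * ((-1 : ℂ) ^ q.length) = -1 := by
        rw [← pow_add]
        have : q.length + 1 + q.length = 2 * q.length + 1 := by omega
        rw [this, pow_succ, pow_mul]
        norm_num
      have hsplit : (∑ t ∈ Finset.Icc 1 l, x ^ t / (t : ℂ) ^ k * mhsShift t (n + l - t) q)
          + ∑ t ∈ Finset.Ioc l (n + l), x ^ t / (t : ℂ) ^ k * mhsShift t (n + l - t) q =
          ∑ t ∈ Finset.Icc 1 (n + l), x ^ t / (t : ℂ) ^ k * mhsShift t (n + l - t) q := by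
        rw [show Finset.Icc 1 l = Finset.Ioc 0 l from Finset.Icc_add_one_left_eq_Ioc 0 l,
          show Finset.Icc 1 (n + l) = Finset.Ioc 0 (n + l) from Finset.Icc_add_one_left_eq_Ioc 0 (n + l)]
        exact Finset.sum_Ioc_consecutive _ (Nat.zero_le l) (Nat.le_add_left l n)
      have hC : mhsShift l n (q ++ [(k, x)]) =
          ∑ t ∈ Finset.Ioc l (n + l), x ^ t / (t : ℂ) ^ k * mhsShift t (n + l - t) q := by
        rw [mhsShift_append,
          show Finset.Ioc l (n + l) = Finset.map (addRightEmbedding l) (Finset.Ioc 0 n) by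
            rw [Finset.map_add_right_Ioc, zero_add],
          Finset.sum_map,
          show Finset.Ioc 0 n = Finset.Icc 1 n from (Finset.Icc_add_one_left_eq_Ioc 0 n).symm]
        apply Finset.sum_congr rfl
        intro u hu
        simp only [Finset.mem_Icc] at hu
        simp only [addRightEmbedding_apply]
        rw [show n + l - (u + l) = n - u by omega, show u + l = l + u from Nat.add_comm u l]
      rw [hC]
      simp only [List.reverse_nil]
      rw [show mhss l [] = 1 from by simp [mhss], mul_one, hB, ← hsplit, mul_add,
        ← mul_assoc, ← mul_assoc, hpow, ← pow_add,
        Even.neg_one_pow ⟨q.length + 1, rfl⟩, one_mul]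
      ring

lemma take_zip (l : List ℕ) (l' : List ℂ) (n : ℕ) :
    (l.zip l').take n = (l.take n).zip (l'.take n) := by
  simp [List.zip, List.take_zipWith]

lemma drop_zip (l : List ℕ) (l' : List ℂ) (n : ℕ) :
    (l.zip l').drop n = (l.drop n).zip (l'.drop n) := by
  simp [List.zip, List.drop_zipWith]

theorem stmt2 (ks : List ℕ) (xs : List ℂ) (hlen : ks.length = xs.length)
    (hk : ∀ k ∈ ks, 1 ≤ k) (hx : ∀ x ∈ xs, ‖x‖ ≤ 1)
    (l : ℕ) (n : ℕ) (hn : 1 ≤ n) :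
    mhsShift l n (ks.zip xs) =
      (-1 : ℂ) ^ ks.length * ∑ j ∈ Finset.range (ks.length + 1),
        (-1 : ℂ) ^ j * mhs (n + l) ((ks.take j).zip (xs.take j)) *
          mhss l (((ks.drop j).zip (xs.drop j)).reverse) := by
  have h := main_lemma (ks.zip xs) l n
  have hl : (ks.zip xs).length = ks.length := by
    rw [List.length_zip, hlen, min_self]
  rw [h, hl]
  congr 1
  apply Finset.sum_congr rfl
  intro j _
  rw [take_zip, drop_zip]
end

section
/- For any composition k = (k_1,...,k_r), complex numbers x_1,...,x_r in the closed unit disk, and integers l ≥ 0, n ≥ 1, the shifted non-strict multiple harmonic sum Σ_{n ≥ n_1 ≥ n_2 ≥ ... ≥ n_r > 0} Π_{j=1}^r x_j^{n_j+l}/(n_j+l)^{k_j} equals (-1)^r Σ_{j=0}^r (-1)^j ζ_{n+l}^⋆(k_1,...,k_j; x_1,...,x_j) · ζ_l(k_r,...,k_{j+1}; x_r,...,x_{j+1}). -/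
open Finset

/-- Shifted non-strict (star) multiple harmonic sum
`Σ_{n ≥ n_1 ≥ ... ≥ n_r ≥ 1} Π x_j^{n_j+l}/(n_j+l)^{k_j}`. -/
noncomputable def mhssShift (l : ℕ) : ℕ → List (ℕ × ℂ) → ℂ
  | _, [] => 1
  | n, (k, x) :: rest =>
      ∑ m ∈ Finset.Icc 1 n, x ^ (m + l) / ((m + l : ℕ) : ℂ) ^ k * mhssShift l m rest

@[simp] lemma mhss_nil (n : ℕ) : mhss n [] = 1 := rfl
@[simp] lemma mhs_nil (n : ℕ) : mhs n [] = 1 := rfl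

@[simp] lemma mhss_zero (p : ℕ × ℂ) (rest : List (ℕ × ℂ)) : mhss 0 (p :: rest) = 0 := by
  obtain ⟨k, x⟩ := p; rw [mhss]; simp

@[simp] lemma mhs_zero (p : ℕ × ℂ) (rest : List (ℕ × ℂ)) : mhs 0 (p :: rest) = 0 := by
  obtain ⟨k, x⟩ := p; rw [mhs]; simp

lemma mhss_succ (m k : ℕ) (x : ℂ) (rest : List (ℕ × ℂ)) :
    mhss (m + 1) ((k, x) :: rest)
      = mhss m ((k, x) :: rest) + x ^ (m + 1) / ((m + 1 : ℕ) : ℂ) ^ k * mhss (m + 1) rest := by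
  rw [mhss, mhss, Finset.sum_Icc_succ_top (by omega : 1 ≤ m + 1)]

lemma mhs_succ (m k : ℕ) (x : ℂ) (rest : List (ℕ × ℂ)) :
    mhs (m + 1) ((k, x) :: rest)
      = mhs m ((k, x) :: rest) + x ^ (m + 1) / ((m + 1 : ℕ) : ℂ) ^ k * mhs m rest := by
  rw [mhs, mhs, Finset.sum_Icc_succ_top (by omega : 1 ≤ m + 1)]
  simp

lemma mhs_singleton (n k : ℕ) (x : ℂ) : mhs n [(k, x)] = mhss n [(k, x)] := by
  rw [mhs, mhss]; simp

lemma vanishAux : ∀ (r : ℕ) (L : List (ℕ × ℂ)), L.length = r → L ≠ [] → ∀ m : ℕ,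
    ∑ j ∈ Finset.range (L.length + 1),
      (-1 : ℂ) ^ j * mhss m (L.take j) * mhs m ((L.drop j).reverse) = 0 := by
  intro r
  induction r using Nat.strong_induction_on with
  | _ r ih =>
  rintro (_ | ⟨⟨k1, x1⟩, T⟩) hr hL
  · exact absurd rfl hL
  rcases eq_or_ne T [] with hT | hT
  · subst hT
    intro m
    simp [Finset.sum_range_succ, mhs_singleton]
  · obtain ⟨M, b, hTb⟩ := T.eq_nil_or_concat.resolve_left hT
    obtain ⟨kb, xb⟩ := b
    rw [List.concat_eq_append] at hTb
    subst hTb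
    intro m
    set T : List (ℕ × ℂ) := M ++ [(kb, xb)] with hTdef
    set I : List (ℕ × ℂ) := (k1, x1) :: M with hIdef
    set L : List (ℕ × ℂ) := (k1, x1) :: T with hLdef
    have hLI : L = I ++ [(kb, xb)] := by simp [hLdef, hIdef, hTdef]
    have hlenT : L.length = T.length + 1 := by simp [hLdef]
    have hlenI : L.length = I.length + 1 := by rw [hLI]; simp
    have hTne : T ≠ [] := by simp [hTdef]
    have hIne : I ≠ [] := by simp [hIdef]
    have hrT : T.length < r := by omega
    have hrI : I.length < r := by omega
    induction m with
    | zero =>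
      apply Finset.sum_eq_zero
      intro j hj
      rcases Nat.eq_zero_or_pos j with h0 | h1
      · subst h0
        have : (L.drop 0).reverse = (kb, xb) :: I.reverse := by
          rw [List.drop_zero, hLI, List.reverse_append]; rfl
        rw [this, mhs_zero, mul_zero]
      · obtain ⟨i, rfl⟩ : ∃ i, j = i + 1 := ⟨j - 1, by omega⟩
        have : L.take (i + 1) = (k1, x1) :: T.take i := by rw [hLdef, List.take_succ_cons]
        rw [this, mhss_zero, mul_zero, zero_mul]
    | succ m ihm =>
      have hc1 : ∀ j, mhss (m + 1) (L.take j)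
          = mhss m (L.take j)
            + (if j = 0 then 0 else
                x1 ^ (m + 1) / ((m + 1 : ℕ) : ℂ) ^ k1 * mhss (m + 1) (T.take (j - 1))) := by
        intro j
        rcases Nat.eq_zero_or_pos j with h0 | h1
        · subst h0; simp
        · obtain ⟨i, rfl⟩ : ∃ i, j = i + 1 := ⟨j - 1, by omega⟩
          have ht : L.take (i + 1) = (k1, x1) :: T.take i := by rw [hLdef, List.take_succ_cons]
          rw [ht, if_neg (by omega : ¬ i + 1 = 0), Nat.add_sub_cancel, mhss_succ]
      have hc2 : ∀ j ≤ L.length, mhs (m + 1) ((L.drop j).reverse)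
          = mhs m ((L.drop j).reverse)
            + (if j = L.length then 0 else
                xb ^ (m + 1) / ((m + 1 : ℕ) : ℂ) ^ kb * mhs m ((I.drop j).reverse)) := by
        intro j hj
        rcases eq_or_ne j L.length with h0 | h1
        · subst h0; simp
        · have hjI : j ≤ I.length := by omega
          have hdrop : L.drop j = I.drop j ++ [(kb, xb)] := by
            rw [hLI, List.drop_append, Nat.sub_eq_zero_of_le hjI, List.drop_zero]
          rw [if_neg h1, hdrop, List.reverse_append, List.reverse_singleton,
            List.singleton_append, mhs_succ]
      have key : ∀ j ∈ Finset.range (L.length + 1),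
          (-1 : ℂ) ^ j * mhss (m + 1) (L.take j) * mhs (m + 1) ((L.drop j).reverse)
          = (-1 : ℂ) ^ j * mhss m (L.take j) * mhs m ((L.drop j).reverse)
            + (-1 : ℂ) ^ j * (if j = 0 then 0 else
                x1 ^ (m + 1) / ((m + 1 : ℕ) : ℂ) ^ k1 * mhss (m + 1) (T.take (j - 1)))
              * mhs (m + 1) ((L.drop j).reverse)
            + (-1 : ℂ) ^ j * mhss m (L.take j)
              * (if j = L.length then 0 else
                xb ^ (m + 1) / ((m + 1 : ℕ) : ℂ) ^ kb * mhs m ((I.drop j).reverse)) := by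
        intro j hj
        have hj' : j ≤ L.length := by simp only [Finset.mem_range] at hj; omega
        rw [hc1 j, hc2 j hj']
        ring
      rw [Finset.sum_congr rfl key, Finset.sum_add_distrib, Finset.sum_add_distrib, ihm]
      have hS2 : ∑ j ∈ Finset.range (L.length + 1),
          (-1 : ℂ) ^ j * (if j = 0 then 0 else
              x1 ^ (m + 1) / ((m + 1 : ℕ) : ℂ) ^ k1 * mhss (m + 1) (T.take (j - 1)))
            * mhs (m + 1) ((L.drop j).reverse) = 0 := by
        rw [Finset.sum_range_succ']
        have hstep : ∀ j ∈ Finset.range L.length,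
            (-1 : ℂ) ^ (j + 1) * (if j + 1 = 0 then 0 else
                x1 ^ (m + 1) / ((m + 1 : ℕ) : ℂ) ^ k1 * mhss (m + 1) (T.take (j + 1 - 1)))
              * mhs (m + 1) ((L.drop (j + 1)).reverse)
            = (-(x1 ^ (m + 1) / ((m + 1 : ℕ) : ℂ) ^ k1)) *
              ((-1 : ℂ) ^ j * mhss (m + 1) (T.take j) * mhs (m + 1) ((T.drop j).reverse)) := by
          intro j _
          have hd : L.drop (j + 1) = T.drop j := by rw [hLdef, List.drop_succ_cons]
          rw [if_neg (by omega : ¬ j + 1 = 0), Nat.add_sub_cancel, hd]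
          ring
        rw [Finset.sum_congr rfl hstep, ← Finset.mul_sum]
        have := ih T.length hrT T rfl hTne (m + 1)
        rw [hlenT, this]
        simp
      have hS3 : ∑ j ∈ Finset.range (L.length + 1),
          (-1 : ℂ) ^ j * mhss m (L.take j)
            * (if j = L.length then 0 else
              xb ^ (m + 1) / ((m + 1 : ℕ) : ℂ) ^ kb * mhs m ((I.drop j).reverse)) = 0 := by
        rw [Finset.sum_range_succ, if_pos rfl]
        have hstep : ∀ j ∈ Finset.range L.length,
            (-1 : ℂ) ^ j * mhss m (L.take j)
              * (if j = L.length then 0 else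
                xb ^ (m + 1) / ((m + 1 : ℕ) : ℂ) ^ kb * mhs m ((I.drop j).reverse))
            = (xb ^ (m + 1) / ((m + 1 : ℕ) : ℂ) ^ kb) *
              ((-1 : ℂ) ^ j * mhss m (I.take j) * mhs m ((I.drop j).reverse)) := by
          intro j hj
          simp only [Finset.mem_range] at hj
          have hjI : j ≤ I.length := by omega
          have htake : L.take j = I.take j := by
            rw [hLI, List.take_append, Nat.sub_eq_zero_of_le hjI,
              List.take_zero, List.append_nil]
          rw [if_neg (by omega : ¬ j = L.length), htake]
          ring
        rw [Finset.sum_congr rfl hstep, ← Finset.mul_sum]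
        have := ih I.length hrI I rfl hIne m
        rw [hlenI, this]
        simp
      rw [hS2, hS3]
      ring

lemma vanish (L : List (ℕ × ℂ)) (hL : L ≠ []) (m : ℕ) :
    ∑ j ∈ Finset.range (L.length + 1),
      (-1 : ℂ) ^ j * mhss m (L.take j) * mhs m ((L.drop j).reverse) = 0 :=
  vanishAux L.length L rfl hL m


lemma sum_shift (k : ℕ) (x : ℂ) (T : List (ℕ × ℂ)) (l : ℕ) : ∀ n : ℕ,
    ∑ m ∈ Finset.Icc 1 n, x ^ (m + l) / ((m + l : ℕ) : ℂ) ^ k * mhss (m + l) T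
      = mhss (n + l) ((k, x) :: T) - mhss l ((k, x) :: T) := by
  intro n
  induction n with
  | zero => simp
  | succ n ihn =>
    rw [Finset.sum_Icc_succ_top (by omega : 1 ≤ n + 1), ihn]
    have h1 : n + 1 + l = (n + l) + 1 := by omega
    rw [h1, mhss_succ]
    ring

lemma keyLemma (L : List (ℕ × ℂ)) : ∀ l n : ℕ,
    mhssShift l n L = (-1 : ℂ) ^ L.length * ∑ j ∈ Finset.range (L.length + 1),
      (-1 : ℂ) ^ j * mhss (n + l) (L.take j) * mhs l ((L.drop j).reverse) := by
  induction L with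
  | nil => intro l n; simp [mhssShift]
  | cons a T ihT =>
    obtain ⟨k, x⟩ := a
    intro l n
    rw [mhssShift]
    have step1 : ∀ m ∈ Finset.Icc 1 n,
        x ^ (m + l) / ((m + l : ℕ) : ℂ) ^ k * mhssShift l m T
        = ∑ j ∈ Finset.range (T.length + 1),
            (-1 : ℂ) ^ T.length * (-1 : ℂ) ^ j * mhs l ((T.drop j).reverse)
              * (x ^ (m + l) / ((m + l : ℕ) : ℂ) ^ k * mhss (m + l) (T.take j)) := by
      intro m _
      rw [ihT l m, Finset.mul_sum, Finset.mul_sum]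
      exact Finset.sum_congr rfl fun j _ => by ring
    rw [Finset.sum_congr rfl step1, Finset.sum_comm]
    have step2 : ∀ j ∈ Finset.range (T.length + 1),
        ∑ m ∈ Finset.Icc 1 n,
          (-1 : ℂ) ^ T.length * (-1 : ℂ) ^ j * mhs l ((T.drop j).reverse)
            * (x ^ (m + l) / ((m + l : ℕ) : ℂ) ^ k * mhss (m + l) (T.take j))
        = (-1 : ℂ) ^ T.length * ((-1 : ℂ) ^ j *
            ((mhss (n + l) ((k, x) :: T.take j)) * mhs l ((T.drop j).reverse)))
          - (-1 : ℂ) ^ T.length * ((-1 : ℂ) ^ j *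
            ((mhss l ((k, x) :: T.take j)) * mhs l ((T.drop j).reverse))) := by
      intro j _
      rw [← Finset.mul_sum, sum_shift]
      ring
    rw [Finset.sum_congr rfl step2, Finset.sum_sub_distrib, ← Finset.mul_sum, ← Finset.mul_sum]
    have hv := vanish ((k, x) :: T) (by simp) l
    rw [List.length_cons]
    rw [List.length_cons, Finset.sum_range_succ'] at hv
    conv_rhs => rw [Finset.sum_range_succ']
    simp only [List.take_succ_cons, List.drop_succ_cons, List.take_zero, List.drop_zero,
      mhss_nil, pow_zero, one_mul, mul_one, List.length_cons] at hv ⊢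
    have e1 : ∑ j ∈ Finset.range (T.length + 1),
        (-1 : ℂ) ^ (j + 1) * mhss (n + l) ((k, x) :: T.take j) * mhs l ((T.drop j).reverse)
        = - ∑ j ∈ Finset.range (T.length + 1),
            (-1 : ℂ) ^ j * (mhss (n + l) ((k, x) :: T.take j) * mhs l ((T.drop j).reverse)) := by
      rw [← Finset.sum_neg_distrib]
      exact Finset.sum_congr rfl fun j _ => by ring
    have e2 : ∑ j ∈ Finset.range (T.length + 1),
        (-1 : ℂ) ^ (j + 1) * mhss l ((k, x) :: T.take j) * mhs l ((T.drop j).reverse)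
        = - ∑ j ∈ Finset.range (T.length + 1),
            (-1 : ℂ) ^ j * (mhss l ((k, x) :: T.take j) * mhs l ((T.drop j).reverse)) := by
      rw [← Finset.sum_neg_distrib]
      exact Finset.sum_congr rfl fun j _ => by ring
    rw [e1]
    rw [e2] at hv
    linear_combination ((-1 : ℂ) ^ T.length) * hv

theorem stmt3 (ks : List ℕ) (xs : List ℂ) (hlen : ks.length = xs.length)
    (hk : ∀ k ∈ ks, 1 ≤ k) (hx : ∀ x ∈ xs, ‖x‖ ≤ 1)
    (l : ℕ) (n : ℕ) (hn : 1 ≤ n) :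
    mhssShift l n (ks.zip xs) =
      (-1 : ℂ) ^ ks.length * ∑ j ∈ Finset.range (ks.length + 1),
        (-1 : ℂ) ^ j * mhss (n + l) ((ks.take j).zip (xs.take j)) *
          mhs l (((ks.drop j).zip (xs.drop j)).reverse) := by
  have hlz : (ks.zip xs).length = ks.length := by
    rw [List.length_zip, hlen, min_self]
  rw [keyLemma, hlz]
  congr 1
  apply Finset.sum_congr rfl
  intro j _
  simp [List.zip, List.take_zipWith, List.drop_zipWith]
end

section
/- For positive integers m_1,...,m_p with m_p ≥ 2 and composition k = (k_1,...,k_r), the convoluted multiple t-values satisfy Σ_{j=1}^{p+1} (-1)^{j-1} t(m_p,...,m_j) · t(k ⊛ (1,m_1,...,m_{j-1})^⋆) = t(m_p,...,m_1,k_1+1,k_2,...,k_r), where t(∅) := 1 for the j = p+1 term. -/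
open Finset

/-- Multiple t-harmonic sum `t_n(k) = Σ_{n ≥ n_1 > ... > n_r > 0} Π 1/(2n_j−1)^{k_j}`. -/
noncomputable def thsum : ℕ → List ℕ → ℝ
  | _, [] => 1
  | n, k :: rest =>
      ∑ m ∈ Finset.Icc 1 n, (1 / ((2 * m - 1 : ℕ) : ℝ) ^ k) * thsum (m - 1) rest

/-- Multiple t-harmonic star sum `t_n^⋆(k)`. -/
noncomputable def thsums : ℕ → List ℕ → ℝ
  | _, [] => 1
  | n, k :: rest =>
      ∑ m ∈ Finset.Icc 1 n, (1 / ((2 * m - 1 : ℕ) : ℝ) ^ k) * thsums m rest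

/-- Multiple t-value `t(k) = Σ_{n_1 > ... > n_r > 0} Π 1/(2n_j−1)^{k_j}`, with `t(∅) = 1`. -/
noncomputable def tval : List ℕ → ℝ
  | [] => 1
  | k :: rest =>
      ∑' n : ℕ+, (1 / ((2 * (n : ℕ) - 1 : ℕ) : ℝ) ^ k) * thsum ((n : ℕ) - 1) rest

/-- Convoluted multiple t-value
`t(k ⊛ l^⋆) = Σ_{n≥1} t_{n-1}(k_2,...,k_r) t_n^⋆(l_2,...,l_s)/(2n−1)^{k_1+l_1}`. -/
noncomputable def convT (ks ls : List ℕ) : ℝ :=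
  ∑' n : ℕ+, thsum ((n : ℕ) - 1) ks.tail * thsums (n : ℕ) ls.tail /
    ((2 * (n : ℕ) - 1 : ℕ) : ℝ) ^ (ks.headI + ls.headI)

namespace Stmt8Aux

/-- coefficient `1/(2m−1)^k`. -/
noncomputable def cf (k m : ℕ) : ℝ := 1 / ((2 * m - 1 : ℕ) : ℝ) ^ k

lemma thsum_nil (n : ℕ) : thsum n [] = 1 := rfl

lemma thsum_cons (n k : ℕ) (rest : List ℕ) :
    thsum n (k :: rest) = ∑ m ∈ Icc 1 n, cf k m * thsum (m - 1) rest := rfl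

lemma thsums_nil (n : ℕ) : thsums n [] = 1 := rfl

lemma thsums_cons (n k : ℕ) (rest : List ℕ) :
    thsums n (k :: rest) = ∑ m ∈ Icc 1 n, cf k m * thsums m rest := rfl

lemma cf_nonneg (k m : ℕ) : 0 ≤ cf k m := by
  unfold cf; positivity

lemma one_le_2m1 {m : ℕ} (hm : 1 ≤ m) : (1:ℝ) ≤ ((2 * m - 1 : ℕ) : ℝ) := by
  exact_mod_cast Nat.one_le_iff_ne_zero.mpr (by omega)

lemma cf_le_cf_one {k m : ℕ} (hk : 1 ≤ k) (hm : 1 ≤ m) :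
    cf k m ≤ 1 / ((2 * m - 1 : ℕ) : ℝ) := by
  unfold cf
  apply one_div_le_one_div_of_le (by linarith [one_le_2m1 hm])
  calc ((2 * m - 1 : ℕ) : ℝ) = ((2 * m - 1 : ℕ) : ℝ) ^ 1 := (pow_one _).symm
    _ ≤ ((2 * m - 1 : ℕ) : ℝ) ^ k := pow_le_pow_right₀ (one_le_2m1 hm) hk

lemma cf_le_inv_sq {k m : ℕ} (hk : 2 ≤ k) (hm : 1 ≤ m) :
    cf k m ≤ ((m:ℝ) ^ 2)⁻¹ := by
  unfold cf
  rw [one_div]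
  apply inv_anti₀ (by positivity)
  have h1 : (m:ℝ) ≤ ((2 * m - 1 : ℕ) : ℝ) := by
    have : (m:ℕ) ≤ 2 * m - 1 := by omega
    exact_mod_cast this
  calc (m:ℝ) ^ 2 ≤ ((2 * m - 1 : ℕ) : ℝ) ^ 2 := by
        apply pow_le_pow_left₀ (by positivity) h1
    _ ≤ ((2 * m - 1 : ℕ) : ℝ) ^ k := pow_le_pow_right₀ (one_le_2m1 hm) hk

lemma thsum_nonneg (l : List ℕ) : ∀ n, 0 ≤ thsum n l := by
  induction l with
  | nil => intro n; rw [thsum_nil]; norm_num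
  | cons k rest ih =>
    intro n
    rw [thsum_cons]
    exact Finset.sum_nonneg fun m _ => mul_nonneg (cf_nonneg _ _) (ih _)

lemma thsums_nonneg (l : List ℕ) : ∀ n, 0 ≤ thsums n l := by
  induction l with
  | nil => intro n; rw [thsums_nil]; norm_num
  | cons k rest ih =>
    intro n
    rw [thsums_cons]
    exact Finset.sum_nonneg fun m _ => mul_nonneg (cf_nonneg _ _) (ih _)

lemma thsums_mono (l : List ℕ) {n n' : ℕ} (h : n ≤ n') : thsums n l ≤ thsums n' l := by
  cases l with
  | nil => rw [thsums_nil, thsums_nil]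
  | cons k rest =>
    rw [thsums_cons, thsums_cons]
    apply Finset.sum_le_sum_of_subset_of_nonneg (Finset.Icc_subset_Icc_right h)
    intro m _ _
    exact mul_nonneg (cf_nonneg _ _) (thsums_nonneg _ _)

lemma thsum_le_thsums (l : List ℕ) : ∀ n, thsum n l ≤ thsums n l := by
  induction l with
  | nil => intro n; rw [thsum_nil, thsums_nil]
  | cons k rest ih =>
    intro n
    rw [thsum_cons, thsums_cons]
    apply Finset.sum_le_sum
    intro m _
    apply mul_le_mul_of_nonneg_left _ (cf_nonneg _ _)
    exact (ih _).trans (thsums_mono _ (Nat.sub_le m 1))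

/-! ### the fourth-root bound -/

noncomputable def qr (n : ℕ) : ℝ := Real.sqrt (Real.sqrt n)

lemma qr_nonneg (n : ℕ) : 0 ≤ qr n := Real.sqrt_nonneg _

lemma qr_mono {n n' : ℕ} (h : n ≤ n') : qr n ≤ qr n' :=
  Real.sqrt_le_sqrt (Real.sqrt_le_sqrt (by exact_mod_cast h))

lemma one_le_qr {n : ℕ} (h : 1 ≤ n) : 1 ≤ qr n := by
  have h1 : (1:ℝ) ≤ Real.sqrt n := by
    rw [show (1:ℝ) = Real.sqrt 1 by simp]
    exact Real.sqrt_le_sqrt (by exact_mod_cast h)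
  rw [show (1:ℝ) = Real.sqrt 1 by simp]
  exact Real.sqrt_le_sqrt h1

lemma qr_pow4 (n : ℕ) : qr n ^ 4 = n := by
  have h1 : qr n ^ 2 = Real.sqrt n := Real.sq_sqrt (Real.sqrt_nonneg _)
  have h2 : Real.sqrt n ^ 2 = n := Real.sq_sqrt (by positivity)
  calc qr n ^ 4 = (qr n ^ 2) ^ 2 := by ring
    _ = (n:ℝ) := by rw [h1, h2]

lemma qr_sq (n : ℕ) : qr n ^ 2 = Real.sqrt n := Real.sq_sqrt (Real.sqrt_nonneg _)

lemma qr_step {m : ℕ} (hm : 1 ≤ m) :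
    1 / ((2 * m - 1 : ℕ) : ℝ) * qr m ≤ 4 * (qr m - qr (m - 1)) := by
  set a := qr m with ha
  set b := qr (m - 1) with hb
  have ha1 : 1 ≤ a := one_le_qr hm
  have hb0 : 0 ≤ b := qr_nonneg _
  have hba : b ≤ a := qr_mono (Nat.sub_le m 1)
  have h4 : a ^ 4 = m := qr_pow4 m
  have hb4 : b ^ 4 = (m : ℝ) - 1 := by
    rw [qr_pow4]
    have : ((m - 1 : ℕ) : ℝ) = (m : ℝ) - 1 := by
      rw [Nat.cast_sub hm]; norm_num
    rw [this]
  have hc : ((2 * m - 1 : ℕ) : ℝ) = 2 * (m : ℝ) - 1 := by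
    rw [Nat.cast_sub (by omega)]; push_cast; ring
  have hkey : (a - b) * ((a + b) * (a ^ 2 + b ^ 2)) = 1 := by
    have : (a - b) * ((a + b) * (a ^ 2 + b ^ 2)) = a ^ 4 - b ^ 4 := by ring
    rw [this, h4, hb4]; ring
  have hb2 : b ^ 2 ≤ a ^ 2 := by nlinarith
  have hb3 : b ^ 3 ≤ a ^ 3 := by nlinarith
  have hX : (a + b) * (a ^ 2 + b ^ 2) ≤ 4 * a ^ 3 := by nlinarith
  have ht0 : 0 ≤ a - b := by linarith
  have h1 : 1 ≤ 4 * (a - b) * a ^ 3 := by nlinarith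
  have hpos : (0:ℝ) < 2 * (m:ℝ) - 1 := by
    have : (1:ℝ) ≤ (m:ℝ) := by exact_mod_cast hm
    linarith
  rw [hc, div_mul_eq_mul_div, one_mul, div_le_iff₀ hpos]
  have hm4 : (m:ℝ) = a ^ 4 := h4.symm
  rw [hm4]
  have ha4 : 1 ≤ a ^ 4 := one_le_pow₀ ha1
  have h2 : a * 1 ≤ a * (4 * (a - b) * a ^ 3) :=
    mul_le_mul_of_nonneg_left h1 (by linarith)
  have h3 : (a - b) * a ^ 4 ≤ (a - b) * (2 * a ^ 4 - 1) :=
    mul_le_mul_of_nonneg_left (by linarith) ht0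
  nlinarith [h2, h3]

lemma qr_tel (n : ℕ) : ∑ m ∈ Icc 1 n, 1 / ((2 * m - 1 : ℕ) : ℝ) * qr m ≤ 4 * qr n := by
  induction n with
  | zero => simp [qr]
  | succ n ih =>
    rw [Finset.sum_Icc_succ_top (by omega)]
    have h := qr_step (m := n + 1) (by omega)
    simp only [Nat.add_sub_cancel] at h
    linarith

lemma thsums_le (l : List ℕ) (hl : ∀ k ∈ l, 1 ≤ k) :
    ∀ n, 1 ≤ n → thsums n l ≤ 4 ^ l.length * qr n := by
  induction l with
  | nil =>
    intro n hn
    rw [thsums_nil]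
    simpa using one_le_qr hn
  | cons k rest ih =>
    intro n hn
    rw [thsums_cons]
    have hk : 1 ≤ k := hl k (by simp)
    have hrest : ∀ x ∈ rest, 1 ≤ x := fun x hx => hl x (by simp [hx])
    calc ∑ m ∈ Icc 1 n, cf k m * thsums m rest
        ≤ ∑ m ∈ Icc 1 n, 1 / ((2 * m - 1 : ℕ) : ℝ) * (4 ^ rest.length * qr m) := by
          apply Finset.sum_le_sum
          intro m hm
          simp only [mem_Icc] at hm
          exact mul_le_mul (cf_le_cf_one hk hm.1) (ih hrest m hm.1)
            (thsums_nonneg _ _) (by positivity)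
      _ = 4 ^ rest.length * ∑ m ∈ Icc 1 n, 1 / ((2 * m - 1 : ℕ) : ℝ) * qr m := by
          rw [Finset.mul_sum]; apply Finset.sum_congr rfl; intro m _; ring
      _ ≤ 4 ^ rest.length * (4 * qr n) :=
          mul_le_mul_of_nonneg_left (qr_tel n) (by positivity)
      _ = 4 ^ (k :: rest).length * qr n := by
          simp [List.length_cons]; ring

lemma thsum_pred_le (l : List ℕ) (hl : ∀ k ∈ l, 1 ≤ k) {n : ℕ} (hn : 1 ≤ n) :
    thsum (n - 1) l ≤ 4 ^ l.length * qr n :=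
  ((thsum_le_thsums _ _).trans (thsums_mono _ (Nat.sub_le n 1))).trans (thsums_le l hl n hn)

/-! ### the finite truncation `F` and the finite identities -/

/-- `F n N l` : chains `N ≥ n_1 > n_2 > ... > n_r > n` with weights from `l`. -/
noncomputable def F : ℕ → ℕ → List ℕ → ℝ
  | _, _, [] => 1
  | n, N, k :: rest =>
      ∑ m ∈ Finset.Icc (n + 1) N, cf k m * F n (m - 1) rest

lemma F_nil (n N : ℕ) : F n N [] = 1 := rfl

lemma F_cons (n N k : ℕ) (rest : List ℕ) :
    F n N (k :: rest) = ∑ m ∈ Icc (n + 1) N, cf k m * F n (m - 1) rest := rfl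

lemma F_zero (l : List ℕ) : ∀ N, F 0 N l = thsum N l := by
  induction l with
  | nil => intro N; rw [F_nil, thsum_nil]
  | cons k rest ih =>
    intro N
    rw [F_cons, thsum_cons]
    exact Finset.sum_congr rfl fun m _ => by rw [ih]

/-- triangular double-sum swap -/
lemma sum_swap_tri (n N : ℕ) (g : ℕ → ℕ → ℝ) :
    ∑ m ∈ Icc (n + 1) N, ∑ i ∈ Icc (n + 1) (m - 1), g m i
      = ∑ i ∈ Icc (n + 1) N, ∑ m ∈ Icc (i + 1) N, g m i := by
  have h1 : ∀ m ∈ Icc (n + 1) N, ∑ i ∈ Icc (n + 1) (m - 1), g m i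
      = ∑ i ∈ Icc (n + 1) N, if i < m then g m i else 0 := by
    intro m hm
    simp only [mem_Icc] at hm
    rw [← Finset.sum_filter]
    apply Finset.sum_congr _ (fun _ _ => rfl)
    ext i
    simp only [mem_Icc, mem_filter]
    omega
  have h2 : ∀ i ∈ Icc (n + 1) N, ∑ m ∈ Icc (n + 1) N, (if i < m then g m i else 0)
      = ∑ m ∈ Icc (i + 1) N, g m i := by
    intro i hi
    simp only [mem_Icc] at hi
    rw [← Finset.sum_filter]
    apply Finset.sum_congr _ (fun _ _ => rfl)
    ext m
    simp only [mem_Icc, mem_filter]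
    omega
  rw [Finset.sum_congr rfl h1, Finset.sum_comm, Finset.sum_congr rfl h2]

lemma F_split (l : List ℕ) (k : ℕ) : ∀ n N,
    F n N (l ++ [k]) = ∑ i ∈ Icc (n + 1) N, cf k i * F i N l := by
  induction l with
  | nil =>
    intro n N
    rw [List.nil_append, F_cons]
    exact Finset.sum_congr rfl fun m _ => by rw [F_nil, F_nil]
  | cons k' l' ih =>
    intro n N
    rw [List.cons_append, F_cons]
    have step : ∀ m ∈ Icc (n+1) N, cf k' m * F n (m-1) (l' ++ [k])
        = ∑ i ∈ Icc (n+1) (m-1), cf k' m * (cf k i * F i (m-1) l') := by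
      intro m _; rw [ih n (m-1), Finset.mul_sum]
    rw [Finset.sum_congr rfl step, sum_swap_tri]
    apply Finset.sum_congr rfl
    intro i _
    rw [F_cons, Finset.mul_sum]
    exact Finset.sum_congr rfl fun m _ => by ring

lemma Icc_one_eq_Ioc (x : ℕ) : Icc 1 x = Ioc 0 x := by
  ext v; simp only [mem_Icc, mem_Ioc]; omega

lemma F_mid (A : List ℕ) (k : ℕ) (B : List ℕ) : ∀ N,
    thsum N (A ++ k :: B)
      = ∑ n ∈ Icc 1 N, F n N A * (cf k n * thsum (n - 1) B) := by
  induction A with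
  | nil =>
    intro N
    rw [List.nil_append, thsum_cons]
    exact Finset.sum_congr rfl fun m _ => by rw [F_nil]; ring
  | cons a A' ih =>
    intro N
    rw [List.cons_append, thsum_cons]
    have step : ∀ m ∈ Icc 1 N, cf a m * thsum (m-1) (A' ++ k :: B)
        = ∑ i ∈ Icc 1 (m-1), cf a m * (F i (m-1) A' * (cf k i * thsum (i-1) B)) := by
      intro m _; rw [ih (m-1), Finset.mul_sum]
    rw [Finset.sum_congr rfl step]
    have hsw := sum_swap_tri 0 N
      (fun m i => cf a m * (F i (m-1) A' * (cf k i * thsum (i-1) B)))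
    simp only [Nat.zero_add] at hsw
    rw [hsw]
    apply Finset.sum_congr rfl
    intro i _
    rw [F_cons, Finset.sum_mul]
    exact Finset.sum_congr rfl fun m _ => by ring

/-- finite inclusion–exclusion identity -/
lemma IE (ms : List ℕ) : ∀ n N, n ≤ N →
    ∑ i ∈ range (ms.length + 1),
      (-1:ℝ) ^ i * thsum N ((ms.drop i).reverse) * thsums n (ms.take i)
    = F n N ms.reverse := by
  induction ms with
  | nil =>
    intro n N _
    simp [thsum_nil, thsums_nil, F_nil]
  | cons m rest IH =>
    intro n N hnN
    rw [show (m :: rest).length + 1 = (rest.length + 1) + 1 from rfl,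
      Finset.sum_range_succ']
    have hstep : ∀ i ∈ range (rest.length + 1),
        (-1:ℝ) ^ (i+1) * thsum N (((m::rest).drop (i+1)).reverse)
          * thsums n ((m::rest).take (i+1))
        = ∑ v ∈ Icc 1 n,
            cf m v * (-((-1:ℝ) ^ i * thsum N ((rest.drop i).reverse)
              * thsums v (rest.take i))) := by
      intro i _
      rw [List.drop_succ_cons, List.take_succ_cons, thsums_cons, Finset.mul_sum]
      exact Finset.sum_congr rfl fun v _ => by ring
    rw [Finset.sum_congr rfl hstep, Finset.sum_comm]
    have hinner : ∀ v ∈ Icc 1 n,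
        ∑ i ∈ range (rest.length + 1),
          cf m v * (-((-1:ℝ) ^ i * thsum N ((rest.drop i).reverse)
            * thsums v (rest.take i)))
        = -(cf m v * F v N rest.reverse) := by
      intro v hv
      simp only [mem_Icc] at hv
      rw [show ∀ S : ℝ, -(cf m v * S) = cf m v * -S from fun S => by ring,
        ← IH v N (hv.2.trans hnN)]
      rw [← Finset.sum_neg_distrib, Finset.mul_sum]
    rw [Finset.sum_congr rfl hinner]
    have hf0 : (-1:ℝ) ^ 0 * thsum N (((m::rest).drop 0).reverse)
        * thsums n ((m::rest).take 0) = thsum N (rest.reverse ++ [m]) := by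
      simp [thsums_nil, List.reverse_cons]
    rw [hf0]
    have hful : thsum N (rest.reverse ++ [m])
        = ∑ v ∈ Icc 1 N, cf m v * F v N rest.reverse := by
      rw [← F_zero, F_split]
    have hgoal : F n N ((m :: rest).reverse)
        = ∑ v ∈ Icc (n+1) N, cf m v * F v N rest.reverse := by
      rw [List.reverse_cons, F_split]
    rw [hful, hgoal]
    have hsplit := Finset.sum_Ioc_consecutive
      (f := fun v => cf m v * F v N rest.reverse) (Nat.zero_le n) hnN
    rw [Icc_one_eq_Ioc, Icc_one_eq_Ioc, show Icc (n+1) N = Ioc n N from Finset.Icc_add_one_left_eq_Ioc n N,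
      Finset.sum_neg_distrib]
    linarith [hsplit]

/-! ### summability -/

lemma summable_maj : Summable (fun n : ℕ+ => ((n:ℝ) * Real.sqrt n)⁻¹) := by
  have h1 : Summable (fun n : ℕ => (((n:ℝ)) ^ (3/2 : ℝ))⁻¹) :=
    Real.summable_nat_rpow_inv.mpr (by norm_num)
  have h2 : Summable (fun n : ℕ+ => (((n:ℕ):ℝ) ^ (3/2 : ℝ))⁻¹) :=
    h1.comp_injective (fun a b h => PNat.coe_injective h)
  apply h2.congr
  intro n
  have hp : (0:ℝ) < ((n:ℕ):ℝ) := by exact_mod_cast n.pos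
  rw [show (3/2:ℝ) = 1 + 1/2 by norm_num, Real.rpow_add hp, Real.rpow_one,
    ← Real.sqrt_eq_rpow]

lemma tendsto_sum_Icc (f : ℕ → ℝ) (hs : Summable fun n : ℕ+ => f n) :
    Filter.Tendsto (fun N => ∑ n ∈ Icc 1 N, f n) Filter.atTop (nhds (∑' n : ℕ+, f n)) := by
  have hs' : Summable (fun i : ℕ => f (i + 1)) := by
    have := hs.comp_injective (Equiv.pnatEquivNat.symm.injective)
    apply this.congr
    intro i
    rfl
  have ht : ∑' n : ℕ+, f n = ∑' i : ℕ, f (i + 1) := by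
    rw [← Equiv.tsum_eq Equiv.pnatEquivNat.symm (fun n : ℕ+ => f (n:ℕ))]
    exact tsum_congr fun c => rfl
  have heq : ∀ N, ∑ n ∈ Icc 1 N, f n = ∑ i ∈ range N, f (i + 1) := by
    intro N
    rw [← Finset.Ico_add_one_right_eq_Icc, Finset.sum_Ico_eq_sum_range]
    exact Finset.sum_congr (by simp) fun i _ => by rw [Nat.add_comm]
  rw [ht]
  exact (Filter.tendsto_congr fun N => (heq N).symm).mp hs'.hasSum.tendsto_sum_nat

lemma qr_le_sqrt {n : ℕ} (hn : 1 ≤ n) : qr n ≤ Real.sqrt n := by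
  unfold qr
  have h1 : (1:ℝ) ≤ (n:ℝ) := by exact_mod_cast hn
  have h2 : Real.sqrt (n:ℝ) ≤ (n:ℝ) := by
    calc Real.sqrt (n:ℝ) ≤ Real.sqrt ((n:ℝ)^2) := Real.sqrt_le_sqrt (by nlinarith)
      _ = (n:ℝ) := Real.sqrt_sq (by positivity)
  exact Real.sqrt_le_sqrt h2

lemma inv_sq_mul_sqrt {n : ℕ} (hn : 1 ≤ n) :
    (((n:ℕ):ℝ)^2)⁻¹ * Real.sqrt n = (((n:ℕ):ℝ) * Real.sqrt n)⁻¹ := by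
  have hp : (0:ℝ) < ((n:ℕ):ℝ) := by exact_mod_cast hn
  have hss : Real.sqrt ((n:ℕ):ℝ) * Real.sqrt ((n:ℕ):ℝ) = ((n:ℕ):ℝ) :=
    Real.mul_self_sqrt hp.le
  have hs0 : (0:ℝ) < Real.sqrt ((n:ℕ):ℝ) := Real.sqrt_pos.mpr hp
  field_simp
  linear_combination hss

lemma summable_tval {k : ℕ} (hk : 2 ≤ k) (rest : List ℕ) (hrest : ∀ x ∈ rest, 1 ≤ x) :
    Summable (fun n : ℕ+ => cf k (n:ℕ) * thsum ((n:ℕ) - 1) rest) := by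
  apply Summable.of_nonneg_of_le
    (fun n => mul_nonneg (cf_nonneg _ _) (thsum_nonneg _ _))
    (fun n => ?_) (summable_maj.mul_left ((4:ℝ) ^ rest.length))
  have hn : 1 ≤ (n:ℕ) := n.pos
  calc cf k (n:ℕ) * thsum ((n:ℕ) - 1) rest
      ≤ (((n:ℕ):ℝ)^2)⁻¹ * (4 ^ rest.length * qr (n:ℕ)) :=
        mul_le_mul (cf_le_inv_sq hk hn) (thsum_pred_le rest hrest hn)
          (thsum_nonneg _ _) (by positivity)
    _ ≤ (((n:ℕ):ℝ)^2)⁻¹ * (4 ^ rest.length * Real.sqrt (n:ℕ)) := by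
        have := qr_le_sqrt hn
        gcongr
    _ = 4 ^ rest.length * ((((n:ℕ):ℝ))^2)⁻¹ * Real.sqrt (n:ℕ) := by ring
    _ = 4 ^ rest.length * ((((n:ℕ):ℝ)) * Real.sqrt (n:ℕ))⁻¹ := by
        rw [mul_assoc, inv_sq_mul_sqrt hn]

lemma summable_conv {e : ℕ} (he : 2 ≤ e) (B t : List ℕ) (hB : ∀ x ∈ B, 1 ≤ x)
    (ht : ∀ x ∈ t, 1 ≤ x) :
    Summable (fun n : ℕ+ =>
      thsum ((n:ℕ) - 1) B * thsums (n:ℕ) t / ((2 * (n:ℕ) - 1 : ℕ):ℝ) ^ e) := by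
  apply Summable.of_nonneg_of_le
    (fun n => by
      apply div_nonneg (mul_nonneg (thsum_nonneg _ _) (thsums_nonneg _ _)) (by positivity))
    (fun n => ?_) (summable_maj.mul_left ((4:ℝ) ^ (B.length + t.length)))
  have hn : 1 ≤ (n:ℕ) := n.pos
  have hb1 : thsum ((n:ℕ) - 1) B ≤ 4 ^ B.length * qr (n:ℕ) := thsum_pred_le B hB hn
  have hb2 : thsums (n:ℕ) t ≤ 4 ^ t.length * qr (n:ℕ) := thsums_le t ht _ hn
  have hcf : (((2 * (n:ℕ) - 1 : ℕ):ℝ) ^ e)⁻¹ ≤ (((n:ℕ):ℝ)^2)⁻¹ := by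
    have := cf_le_inv_sq (m := (n:ℕ)) he hn
    unfold cf at this
    rwa [one_div] at this
  calc thsum ((n:ℕ) - 1) B * thsums (n:ℕ) t / ((2 * (n:ℕ) - 1 : ℕ):ℝ) ^ e
      = thsum ((n:ℕ) - 1) B * thsums (n:ℕ) t * (((2 * (n:ℕ) - 1 : ℕ):ℝ) ^ e)⁻¹ := by
        rw [div_eq_mul_inv]
    _ ≤ (4 ^ B.length * qr (n:ℕ)) * (4 ^ t.length * qr (n:ℕ)) * (((n:ℕ):ℝ)^2)⁻¹ := by
        have hq : 0 ≤ (4:ℝ) ^ B.length * qr (n:ℕ) :=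
          mul_nonneg (by positivity) (qr_nonneg _)
        have hq2 : 0 ≤ (4:ℝ) ^ t.length * qr (n:ℕ) :=
          mul_nonneg (by positivity) (qr_nonneg _)
        apply mul_le_mul _ hcf (by positivity) (mul_nonneg hq hq2)
        exact mul_le_mul hb1 hb2 (thsums_nonneg _ _) hq
    _ = 4 ^ (B.length + t.length) * ((((n:ℕ):ℝ)^2)⁻¹ * (qr (n:ℕ))^2) := by ring
    _ = 4 ^ (B.length + t.length) * ((((n:ℕ):ℝ)^2)⁻¹ * Real.sqrt (n:ℕ)) := by
        rw [qr_sq]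
    _ = 4 ^ (B.length + t.length) * ((((n:ℕ):ℝ)) * Real.sqrt (n:ℕ))⁻¹ := by
        rw [inv_sq_mul_sqrt hn]

lemma headI_eq_head' (l : List ℕ) (h : l ≠ []) : l.headI = l.head h := by
  cases l with
  | nil => exact absurd rfl h
  | cons a t => rfl

lemma headI_rev (l : List ℕ) (h : l ≠ []) : l.reverse.headI = l.getLast h := by
  have h2 : l.reverse ≠ [] := by simpa using h
  rw [headI_eq_head' _ h2, List.head_reverse]

lemma headI_append' (l₁ l₂ : List ℕ) (h : l₁ ≠ []) : (l₁ ++ l₂).headI = l₁.headI := by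
  cases l₁ with
  | nil => exact absurd rfl h
  | cons a t => rfl

lemma tendsto_thsum_tval (l : List ℕ) (hl : ∀ x ∈ l, 1 ≤ x)
    (hh : l = [] ∨ 2 ≤ l.headI) :
    Filter.Tendsto (fun N => thsum N l) Filter.atTop (nhds (tval l)) := by
  cases l with
  | nil =>
    have : tval [] = 1 := rfl
    rw [this]
    simpa [thsum_nil] using (tendsto_const_nhds : Filter.Tendsto (fun _ : ℕ => (1:ℝ))
      Filter.atTop (nhds 1))
  | cons k rest =>
    have hk : 2 ≤ k := by
      rcases hh with h | h
      · exact absurd h (by simp)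
      · simpa using h
    have hrest : ∀ x ∈ rest, 1 ≤ x := fun x hx => hl x (List.mem_cons_of_mem _ hx)
    have hs := summable_tval hk rest hrest
    have h := tendsto_sum_Icc (fun n => cf k n * thsum (n - 1) rest) hs
    have e1 : tval (k :: rest) = ∑' n : ℕ+, cf k (n:ℕ) * thsum ((n:ℕ) - 1) rest := rfl
    rw [e1]
    exact (Filter.tendsto_congr fun N => (thsum_cons N k rest).symm).mp h

lemma tendsto_conv (k1 : ℕ) (hk1 : 1 ≤ k1) (kt t : List ℕ) (hkt : ∀ x ∈ kt, 1 ≤ x)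
    (ht : ∀ x ∈ t, 1 ≤ x) :
    Filter.Tendsto (fun N => ∑ n ∈ Icc 1 N,
        thsum (n - 1) kt * thsums n t / ((2 * n - 1 : ℕ):ℝ) ^ (k1 + 1))
      Filter.atTop (nhds (convT (k1 :: kt) (1 :: t))) := by
  have hs := summable_conv (show 2 ≤ k1 + 1 by omega) kt t hkt ht
  have h := tendsto_sum_Icc
    (fun n => thsum (n - 1) kt * thsums n t / ((2 * n - 1 : ℕ):ℝ) ^ (k1 + 1)) hs
  have e1 : convT (k1 :: kt) (1 :: t)
      = ∑' n : ℕ+, thsum ((n:ℕ) - 1) kt * thsums (n:ℕ) t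
          / ((2 * (n:ℕ) - 1 : ℕ):ℝ) ^ (k1 + 1) := rfl
  rw [e1]
  exact h

end Stmt8Aux

theorem stmt8 (ms : List ℕ) (hms : ms ≠ []) (hmpos : ∀ m ∈ ms, 1 ≤ m)
    (hlast : 2 ≤ ms.getLast hms) (ks : List ℕ) (hks : ks ≠ [])
    (hkpos : ∀ k ∈ ks, 1 ≤ k) :
    ∑ j ∈ Finset.Icc 1 (ms.length + 1),
      (-1 : ℝ) ^ (j - 1) * tval ((ms.drop (j - 1)).reverse) *
        convT ks (1 :: ms.take (j - 1)) =
      tval (ms.reverse ++ (ks.headI + 1) :: ks.tail) := by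
  classical
  open Stmt8Aux in
  obtain ⟨k1, kt, rfl⟩ := List.exists_cons_of_ne_nil hks
  have hkt : ∀ x ∈ kt, 1 ≤ x := fun x hx => hkpos x (List.mem_cons_of_mem _ hx)
  simp only [List.headI_cons, List.tail_cons]
  -- reindex the LHS
  have hre : ∑ j ∈ Finset.Icc 1 (ms.length + 1),
      (-1 : ℝ) ^ (j - 1) * tval ((ms.drop (j - 1)).reverse) *
        convT (k1 :: kt) (1 :: ms.take (j - 1))
      = ∑ i ∈ range (ms.length + 1),
      (-1 : ℝ) ^ i * tval ((ms.drop i).reverse) * convT (k1 :: kt) (1 :: ms.take i) := by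
    rw [← Finset.Ico_add_one_right_eq_Icc, Finset.sum_Ico_eq_sum_range]
    exact Finset.sum_congr (by simp) fun i _ => by
      simp only [Nat.add_sub_cancel_left, Nat.add_comm 1 i, Nat.add_sub_cancel]
  rw [hre]
  -- head of ms.reverse
  have hmsrev : ms.reverse ≠ [] := by simpa using hms
  have hh2 : 2 ≤ ms.reverse.headI := by rw [headI_rev ms hms]; exact hlast
  -- the finite identity
  have FIN : ∀ N, ∑ i ∈ range (ms.length + 1),
      (-1 : ℝ) ^ i * thsum N ((ms.drop i).reverse) *
        (∑ n ∈ Icc 1 N, thsum (n - 1) kt * thsums n (ms.take i)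
          / ((2 * n - 1 : ℕ):ℝ) ^ (k1 + 1))
      = thsum N (ms.reverse ++ (k1 + 1) :: kt) := by
    intro N
    have h1 : ∀ i ∈ range (ms.length + 1),
        (-1 : ℝ) ^ i * thsum N ((ms.drop i).reverse) *
          (∑ n ∈ Icc 1 N, thsum (n - 1) kt * thsums n (ms.take i)
            / ((2 * n - 1 : ℕ):ℝ) ^ (k1 + 1))
        = ∑ n ∈ Icc 1 N, (cf (k1 + 1) n * thsum (n - 1) kt) *
            ((-1 : ℝ) ^ i * thsum N ((ms.drop i).reverse) * thsums n (ms.take i)) := by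
      intro i _
      rw [Finset.mul_sum]
      refine Finset.sum_congr rfl fun n _ => ?_
      simp only [cf]
      ring
    rw [Finset.sum_congr rfl h1, Finset.sum_comm]
    have h2 : ∀ n ∈ Icc 1 N,
        ∑ i ∈ range (ms.length + 1), (cf (k1 + 1) n * thsum (n - 1) kt) *
            ((-1 : ℝ) ^ i * thsum N ((ms.drop i).reverse) * thsums n (ms.take i))
        = F n N ms.reverse * (cf (k1 + 1) n * thsum (n - 1) kt) := by
      intro n hn
      simp only [mem_Icc] at hn
      rw [← Finset.mul_sum, IE ms n N hn.2]
      ring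
    rw [Finset.sum_congr rfl h2, ← F_mid]
  -- convergence of the left side
  have hLHS : Filter.Tendsto (fun N => ∑ i ∈ range (ms.length + 1),
      (-1 : ℝ) ^ i * thsum N ((ms.drop i).reverse) *
        (∑ n ∈ Icc 1 N, thsum (n - 1) kt * thsums n (ms.take i)
          / ((2 * n - 1 : ℕ):ℝ) ^ (k1 + 1)))
      Filter.atTop (nhds (∑ i ∈ range (ms.length + 1),
        (-1 : ℝ) ^ i * tval ((ms.drop i).reverse) * convT (k1 :: kt) (1 :: ms.take i))) := by
    apply tendsto_finset_sum
    intro i _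
    have htake : ∀ x ∈ ms.take i, 1 ≤ x := fun x hx => hmpos x (List.mem_of_mem_take hx)
    have hdrop : ∀ x ∈ (ms.drop i).reverse, 1 ≤ x := fun x hx =>
      hmpos x (List.mem_of_mem_drop (List.mem_reverse.mp hx))
    have hhead : (ms.drop i).reverse = [] ∨ 2 ≤ ((ms.drop i).reverse).headI := by
      by_cases hd : ms.drop i = []
      · left; rw [hd]; rfl
      · right
        have : ms.reverse = (ms.drop i).reverse ++ (ms.take i).reverse := by
          rw [← List.reverse_append, List.take_append_drop]
        have h3 : ((ms.drop i).reverse).headI = ms.reverse.headI := by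
          rw [this, headI_append' _ _ (by simpa using hd)]
        rw [h3]; exact hh2
    exact ((tendsto_thsum_tval _ hdrop hhead).const_mul _).mul
      (tendsto_conv k1 (hkpos k1 (List.mem_cons_self)) kt (ms.take i) hkt htake)
  -- convergence of the right side
  have hbig : ∀ x ∈ ms.reverse ++ (k1 + 1) :: kt, 1 ≤ x := by
    intro x hx
    rcases List.mem_append.mp hx with h | h
    · exact hmpos x (List.mem_reverse.mp h)
    · rcases List.mem_cons.mp h with h | h
      · omega
      · exact hkt x h
  have hbighead : ms.reverse ++ (k1 + 1) :: kt = []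
      ∨ 2 ≤ (ms.reverse ++ (k1 + 1) :: kt).headI := by
    right
    rw [headI_append' _ _ hmsrev]
    exact hh2
  have hRHS := tendsto_thsum_tval (ms.reverse ++ (k1 + 1) :: kt) hbig hbighead
  exact tendsto_nhds_unique ((Filter.tendsto_congr FIN).mp hLHS) hRHS
end

section
/- For positive integers m_1,...,m_p, n ∈ ℕ, and real x with |x| < 1, the series identity holds: Σ_{j=1}^p (-1)^{j-1} t_n^⋆(m_1,...,m_{j-1}) · ti_{m_p,...,m_j}(x) + (-1)^p t_n^⋆(m_1,...,m_p; x) equals 2n ∫_0^x t^{2n-1} dt (dt/(1−t²)) (dt/t)^{m_1−1} (t dt/(1−t²)) (dt/t)^{m_2−1} ··· (t dt/(1−t²)) (dt/t)^{m_p−1}, where the iterated integral is over the simplex with the leftmost form evaluated at the smallest variable. -/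
open Finset

/-- Iterated integral `I(f :: fs)(x) = ∫_0^x I(fs)(t) f(t) dt`; the head of the list is
the outermost (largest-variable) 1-form. -/
noncomputable def itInt : List (ℝ → ℝ) → ℝ → ℝ
  | [], _ => 1
  | f :: fs, x => ∫ t in (0:ℝ)..x, itInt fs t * f t

/-- `t_n^⋆` with variables: `Σ_{n ≥ n_1 ≥ ... ≥ n_r ≥ 1} Π x_j^{2n_j−1}/(2n_j−1)^{k_j}`
on (exponent, variable) pairs. -/
noncomputable def tstarP : ℕ → List (ℕ × ℝ) → ℝ
  | _, [] => 1
  | n, (k, x) :: rest =>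
      ∑ m ∈ Finset.Icc 1 n, x ^ (2 * m - 1) / ((2 * m - 1 : ℕ) : ℝ) ^ k * tstarP m rest

/-- Multiple t-polylogarithm
`ti_{k_1,...,k_r}(x) = Σ_{n_1 > ... > n_r > 0} x^{2n_1−1}/((2n_1−1)^{k_1}···(2n_r−1)^{k_r})`. -/
noncomputable def tpl : List ℕ → ℝ → ℝ
  | [], _ => 1
  | k :: rest, x =>
      ∑' n : ℕ+, x ^ (2 * (n : ℕ) - 1) / ((2 * (n : ℕ) - 1 : ℕ) : ℝ) ^ k *
        thsum ((n : ℕ) - 1) rest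

-- auxiliary defs
noncomputable def tsP : ℕ → List ℕ → ℝ → ℝ
  | n, [], x => x ^ (2 * n - 1)
  | n, k :: rest, x =>
      ∑ m ∈ Finset.Icc 1 n, (1 / ((2 * m - 1 : ℕ) : ℝ) ^ k) * tsP m rest x

noncomputable def tsPD : ℕ → List ℕ → ℝ → ℝ
  | n, [], x => ((2 * n - 1 : ℕ) : ℝ) * x ^ (2 * n - 2)
  | n, k :: rest, x =>
      ∑ m ∈ Finset.Icc 1 n, (1 / ((2 * m - 1 : ℕ) : ℝ) ^ k) * tsPD m rest x

noncomputable def tplD : List ℕ → ℝ → ℝ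
  | [], _ => 0
  | k :: rest, x =>
      ∑' n : ℕ+, x ^ (2 * (n : ℕ) - 2) / ((2 * (n : ℕ) - 1 : ℕ) : ℝ) ^ (k - 1) *
        thsum ((n : ℕ) - 1) rest

noncomputable def Fms (n : ℕ) (ms : List ℕ) (x : ℝ) : ℝ :=
  ∑ j ∈ Finset.Icc 1 ms.length,
      (-1 : ℝ) ^ (j - 1) * thsums n (ms.take (j - 1)) * tpl ((ms.drop (j - 1)).reverse) x +
    (-1 : ℝ) ^ ms.length * tsP n ms x

noncomputable def Gms (n : ℕ) (ms : List ℕ) (x : ℝ) : ℝ :=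
  ∑ j ∈ Finset.Icc 1 ms.length,
      (-1 : ℝ) ^ (j - 1) * thsums n (ms.take (j - 1)) * tplD ((ms.drop (j - 1)).reverse) x +
    (-1 : ℝ) ^ ms.length * tsPD n ms x

lemma c2m_pos {m : ℕ} (hm : 1 ≤ m) : (0:ℝ) < ((2 * m - 1 : ℕ) : ℝ) := by
  have : 1 ≤ 2 * m - 1 := by omega
  exact_mod_cast Nat.lt_of_lt_of_le Nat.zero_lt_one this

lemma c2m_one_le {m : ℕ} (hm : 1 ≤ m) : (1:ℝ) ≤ ((2 * m - 1 : ℕ) : ℝ) := by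
  have : 1 ≤ 2 * m - 1 := by omega
  exact_mod_cast this

lemma inv_c2m_le_one {m k : ℕ} (hm : 1 ≤ m) : 1 / ((2 * m - 1 : ℕ) : ℝ) ^ k ≤ 1 := by
  rw [div_le_one (pow_pos (c2m_pos hm) k)]
  exact one_le_pow₀ (c2m_one_le hm)

lemma thsum_nonneg (L : List ℕ) (n : ℕ) : 0 ≤ thsum n L := by
  induction L generalizing n with
  | nil => simp [thsum]
  | cons k rest ih =>
    rw [thsum]
    refine Finset.sum_nonneg fun m hm => mul_nonneg (by positivity) (ih _)

lemma thsum_le (L : List ℕ) (n : ℕ) : thsum n L ≤ ((n:ℝ) + 1) ^ L.length := by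
  induction L generalizing n with
  | nil => simp [thsum]
  | cons k rest ih =>
    rw [thsum, List.length_cons, pow_succ]
    calc ∑ m ∈ Finset.Icc 1 n, (1 / ((2 * m - 1 : ℕ) : ℝ) ^ k) * thsum (m - 1) rest
        ≤ ∑ m ∈ Finset.Icc 1 n, ((n:ℝ) + 1) ^ rest.length := by
          refine Finset.sum_le_sum fun m hm => ?_
          simp only [Finset.mem_Icc] at hm
          have h1 : thsum (m - 1) rest ≤ ((m:ℝ) - 1 + 1) ^ rest.length := by
            have := ih (m - 1)
            have hc : ((m - 1 : ℕ) : ℝ) = (m:ℝ) - 1 := by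
              have : 1 ≤ m := hm.1
              push_cast [this]; ring
            rwa [hc] at this
          have hmn : (m:ℝ) ≤ (n:ℝ) := by exact_mod_cast hm.2
          have hm1 : (1:ℝ) ≤ (m:ℝ) := by exact_mod_cast hm.1
          have h2 : ((m:ℝ) - 1 + 1) ^ rest.length ≤ ((n:ℝ) + 1) ^ rest.length := by
            apply pow_le_pow_left₀ (by linarith) (by linarith)
          calc (1 / ((2 * m - 1 : ℕ) : ℝ) ^ k) * thsum (m - 1) rest
              ≤ 1 * thsum (m - 1) rest := by
                apply mul_le_mul_of_nonneg_right (inv_c2m_le_one hm.1) (thsum_nonneg _ _)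
            _ = thsum (m - 1) rest := one_mul _
            _ ≤ ((n:ℝ) + 1) ^ rest.length := h1.trans h2
      _ = (n : ℝ) * ((n:ℝ) + 1) ^ rest.length := by
          rw [Finset.sum_const, Nat.card_Icc]; push_cast; ring
      _ ≤ ((n:ℝ) + 1) ^ rest.length * ((n:ℝ) + 1) := by
          rw [mul_comm]
          apply mul_le_mul_of_nonneg_left (by linarith [Nat.cast_nonneg (α := ℝ) n]) (by positivity)

-- Summability machinery
set_option maxHeartbeats 1000000 in
lemma summable_aux {r : ℝ} (d : ℕ) (h0 : 0 < r) (h1 : r < 1) :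
    Summable (fun j : ℕ => ((j:ℝ) + 1) ^ d * r ^ (2 * j)) := by
  have hr2 : ‖r ^ 2‖ < 1 := by
    rw [Real.norm_eq_abs, abs_pow, abs_of_pos h0]
    calc r ^ 2 ≤ r * 1 := by nlinarith
    _ < 1 := by linarith
  have h := summable_pow_mul_geometric_of_norm_lt_one (R := ℝ) d hr2
  have h2 : Summable (fun j : ℕ => ((j + 1 : ℕ):ℝ) ^ d * (r ^ 2) ^ (j + 1)) :=
    (summable_nat_add_iff 1).2 h
  have h3 := h2.mul_right ((r ^ 2)⁻¹)
  refine h3.congr fun j => ?_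
  have hne : (r:ℝ) ^ 2 ≠ 0 := by positivity
  push_cast
  rw [pow_mul, pow_succ, mul_assoc, mul_assoc, mul_inv_cancel₀ hne, mul_one]
lemma tsum_pnat_eq (f : ℕ+ → ℝ) : ∑' n : ℕ+, f n = ∑' j : ℕ, f j.succPNat :=
  (Equiv.pnatEquivNat.symm.tsum_eq f).symm

lemma summable_pnat_iff (f : ℕ+ → ℝ) :
    Summable f ↔ Summable (fun j : ℕ => f j.succPNat) :=
  ⟨fun h => h.comp_injective (fun a b hab => by
      simpa using congrArg PNat.natPred hab),
    fun h => (Equiv.pnatEquivNat.symm.summable_iff).1 h⟩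

-- the generic term of `tpl (k::rest)` and its derivative, as ℕ+-indexed functions
lemma tpl_term_bound {x r : ℝ} (hx : |x| ≤ r) (hr1 : r ≤ 1) (k : ℕ) (rest : List ℕ) (m : ℕ+) :
    |x ^ (2 * (m:ℕ) - 1) / ((2 * (m:ℕ) - 1 : ℕ) : ℝ) ^ k * thsum ((m:ℕ) - 1) rest| ≤
      ((m:ℝ)) ^ rest.length * r ^ (2 * (m:ℕ) - 2) := by
  have hm1 : 1 ≤ (m:ℕ) := m.one_le
  have hr0 : 0 ≤ r := le_trans (abs_nonneg x) hx
  have hth : |thsum ((m:ℕ) - 1) rest| ≤ ((m:ℝ)) ^ rest.length := by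
    rw [abs_of_nonneg (thsum_nonneg _ _)]
    have := thsum_le rest ((m:ℕ) - 1)
    have hc : (((m:ℕ) - 1 : ℕ) : ℝ) + 1 = (m:ℝ) := by
      push_cast [hm1]; ring
    rwa [hc] at this
  have hxp : |x ^ (2 * (m:ℕ) - 1) / ((2 * (m:ℕ) - 1 : ℕ) : ℝ) ^ k| ≤ r ^ (2 * (m:ℕ) - 2) := by
    rw [abs_div, abs_pow]
    have h1 : |x| ^ (2 * (m:ℕ) - 1) ≤ r ^ (2 * (m:ℕ) - 1) :=
      pow_le_pow_left₀ (abs_nonneg x) hx _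
    have h2 : r ^ (2 * (m:ℕ) - 1) ≤ r ^ (2 * (m:ℕ) - 2) :=
      pow_le_pow_of_le_one hr0 hr1 (by omega)
    have h3 : (1:ℝ) ≤ |((2 * (m:ℕ) - 1 : ℕ) : ℝ) ^ k| := by
      rw [abs_of_nonneg (by positivity)]
      exact one_le_pow₀ (c2m_one_le hm1)
    calc |x| ^ (2 * (m:ℕ) - 1) / |((2 * (m:ℕ) - 1 : ℕ) : ℝ) ^ k|
        ≤ |x| ^ (2 * (m:ℕ) - 1) / 1 := by
          apply div_le_div_of_nonneg_left ?_ ?_ h3 <;> positivity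
      _ = |x| ^ (2 * (m:ℕ) - 1) := by rw [div_one]
      _ ≤ r ^ (2 * (m:ℕ) - 2) := h1.trans h2
  calc |x ^ (2 * (m:ℕ) - 1) / ((2 * (m:ℕ) - 1 : ℕ) : ℝ) ^ k * thsum ((m:ℕ) - 1) rest|
      = |x ^ (2 * (m:ℕ) - 1) / ((2 * (m:ℕ) - 1 : ℕ) : ℝ) ^ k| * |thsum ((m:ℕ) - 1) rest| :=
        abs_mul _ _
    _ ≤ r ^ (2 * (m:ℕ) - 2) * ((m:ℝ)) ^ rest.length := by
        apply mul_le_mul hxp hth (abs_nonneg _) (by positivity)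
    _ = ((m:ℝ)) ^ rest.length * r ^ (2 * (m:ℕ) - 2) := mul_comm _ _

lemma summable_u {r : ℝ} (h0 : 0 < r) (h1 : r < 1) (d : ℕ) :
    Summable (fun m : ℕ+ => ((m:ℝ)) ^ d * r ^ (2 * (m:ℕ) - 2)) := by
  rw [summable_pnat_iff]
  refine (summable_aux d h0 h1).congr fun j => ?_
  have h : ((j.succPNat : ℕ)) = j + 1 := rfl
  rw [h]
  have h2 : 2 * (j + 1) - 2 = 2 * j := by omega
  rw [h2]
  push_cast
  ring
lemma tplD_term_bound {x r : ℝ} (hx : |x| ≤ r) (k : ℕ) (rest : List ℕ) (m : ℕ+) :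
    |x ^ (2 * (m:ℕ) - 2) / ((2 * (m:ℕ) - 1 : ℕ) : ℝ) ^ (k - 1) * thsum ((m:ℕ) - 1) rest| ≤
      ((m:ℝ)) ^ rest.length * r ^ (2 * (m:ℕ) - 2) := by
  have hm1 : 1 ≤ (m:ℕ) := m.one_le
  have hr0 : 0 ≤ r := le_trans (abs_nonneg x) hx
  have hth : |thsum ((m:ℕ) - 1) rest| ≤ ((m:ℝ)) ^ rest.length := by
    rw [abs_of_nonneg (thsum_nonneg _ _)]
    have := thsum_le rest ((m:ℕ) - 1)
    have hc : (((m:ℕ) - 1 : ℕ) : ℝ) + 1 = (m:ℝ) := by push_cast [hm1]; ring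
    rwa [hc] at this
  have hxp : |x ^ (2 * (m:ℕ) - 2) / ((2 * (m:ℕ) - 1 : ℕ) : ℝ) ^ (k - 1)| ≤
      r ^ (2 * (m:ℕ) - 2) := by
    rw [abs_div, abs_pow]
    have h1 : |x| ^ (2 * (m:ℕ) - 2) ≤ r ^ (2 * (m:ℕ) - 2) :=
      pow_le_pow_left₀ (abs_nonneg x) hx _
    have h3 : (1:ℝ) ≤ |((2 * (m:ℕ) - 1 : ℕ) : ℝ) ^ (k - 1)| := by
      rw [abs_of_nonneg (by positivity)]
      exact one_le_pow₀ (c2m_one_le hm1)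
    calc |x| ^ (2 * (m:ℕ) - 2) / |((2 * (m:ℕ) - 1 : ℕ) : ℝ) ^ (k - 1)|
        ≤ |x| ^ (2 * (m:ℕ) - 2) / 1 := by
          apply div_le_div_of_nonneg_left ?_ ?_ h3 <;> positivity
      _ = |x| ^ (2 * (m:ℕ) - 2) := div_one _
      _ ≤ r ^ (2 * (m:ℕ) - 2) := h1
  calc |x ^ (2 * (m:ℕ) - 2) / ((2 * (m:ℕ) - 1 : ℕ) : ℝ) ^ (k - 1) * thsum ((m:ℕ) - 1) rest|
      = |x ^ (2 * (m:ℕ) - 2) / ((2 * (m:ℕ) - 1 : ℕ) : ℝ) ^ (k - 1)| *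
          |thsum ((m:ℕ) - 1) rest| := abs_mul _ _
    _ ≤ r ^ (2 * (m:ℕ) - 2) * ((m:ℝ)) ^ rest.length :=
        mul_le_mul hxp hth (abs_nonneg _) (by positivity)
    _ = ((m:ℝ)) ^ rest.length * r ^ (2 * (m:ℕ) - 2) := mul_comm _ _

lemma hasDerivAt_term (k : ℕ) (hk : 1 ≤ k) (rest : List ℕ) (m : ℕ+) (y : ℝ) :
    HasDerivAt (fun z : ℝ => z ^ (2 * (m:ℕ) - 1) / ((2 * (m:ℕ) - 1 : ℕ) : ℝ) ^ k *
        thsum ((m:ℕ) - 1) rest)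
      (y ^ (2 * (m:ℕ) - 2) / ((2 * (m:ℕ) - 1 : ℕ) : ℝ) ^ (k - 1) * thsum ((m:ℕ) - 1) rest) y := by
  have hm1 : 1 ≤ (m:ℕ) := m.one_le
  have h := ((hasDerivAt_pow (2 * (m:ℕ) - 1) y).div_const
      (((2 * (m:ℕ) - 1 : ℕ) : ℝ) ^ k)).mul_const (thsum ((m:ℕ) - 1) rest)
  refine h.congr_deriv ?_
  have hc : ((2 * (m:ℕ) - 1 : ℕ) : ℝ) ≠ 0 := ne_of_gt (c2m_pos hm1)
  have he : 2 * (m:ℕ) - 1 - 1 = 2 * (m:ℕ) - 2 := by omega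
  rw [he]
  have hk' : k = (k - 1) + 1 := by omega
  rw [hk', pow_succ, Nat.add_sub_cancel, mul_comm (((2 * (m:ℕ) - 1 : ℕ) : ℝ))
    (y ^ (2 * (m:ℕ) - 2)), mul_div_mul_right _ _ hc]

lemma tpl_eq_tsum (k : ℕ) (rest : List ℕ) :
    tpl (k :: rest) = fun x => ∑' n : ℕ+,
      x ^ (2 * (n:ℕ) - 1) / ((2 * (n:ℕ) - 1 : ℕ) : ℝ) ^ k * thsum ((n:ℕ) - 1) rest := by
  funext x; simp [tpl]

lemma tplD_eq_tsum (k : ℕ) (rest : List ℕ) :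
    tplD (k :: rest) = fun x => ∑' n : ℕ+,
      x ^ (2 * (n:ℕ) - 2) / ((2 * (n:ℕ) - 1 : ℕ) : ℝ) ^ (k - 1) * thsum ((n:ℕ) - 1) rest := by
  funext x; simp [tplD]

lemma tpl_apply (k : ℕ) (rest : List ℕ) (x : ℝ) :
    tpl (k :: rest) x = ∑' n : ℕ+,
      x ^ (2 * (n:ℕ) - 1) / ((2 * (n:ℕ) - 1 : ℕ) : ℝ) ^ k * thsum ((n:ℕ) - 1) rest := by
  simp [tpl]

lemma tplD_apply (k : ℕ) (rest : List ℕ) (x : ℝ) :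
    tplD (k :: rest) x = ∑' n : ℕ+,
      x ^ (2 * (n:ℕ) - 2) / ((2 * (n:ℕ) - 1 : ℕ) : ℝ) ^ (k - 1) * thsum ((n:ℕ) - 1) rest := by
  simp [tplD]

lemma hasDerivAt_tpl (k : ℕ) (hk : 1 ≤ k) (rest : List ℕ) {x : ℝ} (hx : |x| < 1) :
    HasDerivAt (tpl (k :: rest)) (tplD (k :: rest) x) x := by
  set r : ℝ := (1 + |x|) / 2 with hr
  have h0 : 0 < r := by positivity
  have h1 : r < 1 := by rw [hr]; linarith
  have hxr : |x| < r := by rw [hr]; linarith [abs_nonneg x]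
  have hball : x ∈ Metric.ball (0:ℝ) r := by
    simpa [Metric.mem_ball, Real.dist_eq] using hxr
  rw [tpl_eq_tsum, tplD_eq_tsum]
  refine hasDerivAt_tsum_of_isPreconnected (summable_u h0 h1 rest.length)
    Metric.isOpen_ball (convex_ball (0:ℝ) r).isPreconnected
    (fun m y _ => hasDerivAt_term k hk rest m y) (fun m y hy => ?_) hball ?_ hball
  · have hyr : |y| ≤ r := by
      have := Metric.mem_ball.1 hy; rw [Real.dist_eq, sub_zero] at this; exact this.le
    rw [Real.norm_eq_abs]; exact tplD_term_bound hyr k rest m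
  · refine Summable.of_norm_bounded (summable_u h0 h1 rest.length) fun m => ?_
    rw [Real.norm_eq_abs]; exact tpl_term_bound hxr.le h1.le k rest m

lemma continuousOn_tplD (k : ℕ) (rest : List ℕ) {r : ℝ} (h0 : 0 < r) (h1 : r < 1) :
    ContinuousOn (tplD (k :: rest)) {y : ℝ | |y| ≤ r} := by
  rw [tplD_eq_tsum, continuousOn_iff_continuous_restrict]
  refine continuous_tsum (f := fun (m : ℕ+) (y : {y : ℝ | |y| ≤ r}) =>
      (y:ℝ) ^ (2 * (m:ℕ) - 2) / ((2 * (m:ℕ) - 1 : ℕ) : ℝ) ^ (k - 1) * thsum ((m:ℕ) - 1) rest)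
    (fun m => by continuity) (summable_u h0 h1 rest.length) (fun m y => ?_)
  rw [Real.norm_eq_abs]; exact tplD_term_bound y.2 k rest m
-- tsP basic lemmas
lemma tsP_eq_tstarP (L : List ℕ) (k : ℕ) (x : ℝ) : ∀ n : ℕ,
    tstarP n ((k :: L).zip (List.replicate ((k :: L).length - 1) (1:ℝ) ++ [x])) =
      tsP n (k :: L) x := by
  induction L generalizing k with
  | nil =>
    intro n
    simp only [List.length_cons, List.length_nil, Nat.add_sub_cancel, List.replicate_zero,
      List.nil_append, List.zip_cons_cons, List.zip_nil_right]
    rw [tstarP, tsP]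
    refine Finset.sum_congr rfl fun m hm => ?_
    rw [show tstarP m [] = 1 from rfl, show tsP m [] x = x ^ (2*m-1) from rfl]
    ring
  | cons k' L' ih =>
    intro n
    have hlen : (k :: k' :: L').length - 1 = ((k' :: L').length - 1) + 1 := by
      simp [List.length_cons]
    rw [hlen, List.replicate_succ, List.cons_append, List.zip_cons_cons, tstarP, tsP]
    refine Finset.sum_congr rfl fun m hm => ?_
    rw [ih k' m, one_pow]

lemma hasDerivAt_tsP (L : List ℕ) : ∀ (n : ℕ) (x : ℝ),
    HasDerivAt (fun y => tsP n L y) (tsPD n L x) x := by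
  induction L with
  | nil =>
    intro n x
    have h := hasDerivAt_pow (2 * n - 1) x
    rw [show 2*n-1-1 = 2*n-2 from by omega] at h
    simpa [tsP, tsPD] using h
  | cons k rest ih =>
    intro n x
    have : HasDerivAt (fun y => ∑ m ∈ Finset.Icc 1 n,
        (1 / ((2 * m - 1 : ℕ) : ℝ) ^ k) * tsP m rest y)
        (∑ m ∈ Finset.Icc 1 n, (1 / ((2 * m - 1 : ℕ) : ℝ) ^ k) * tsPD m rest x) x := by
      refine HasDerivAt.fun_sum fun m hm => ?_
      exact (ih m x).const_mul _
    simpa [tsP, tsPD] using this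

lemma continuous_tsPD (L : List ℕ) (n : ℕ) : Continuous (fun x => tsPD n L x) := by
  induction L generalizing n with
  | nil => simp only [tsPD]; continuity
  | cons k rest ih =>
    simp only [tsPD]
    exact continuous_finset_sum _ fun m _ => continuous_const.mul (ih m)

lemma tsP_zero (L : List ℕ) : ∀ n : ℕ, 1 ≤ n → tsP n L 0 = 0 := by
  induction L with
  | nil => intro n hn; rw [tsP]; exact zero_pow (by omega)
  | cons k rest ih =>
    intro n hn
    rw [tsP]
    refine Finset.sum_eq_zero fun m hm => ?_
    rw [ih m (Finset.mem_Icc.1 hm).1]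
    exact mul_zero _

lemma tsPD_ksub (L : List ℕ) (k : ℕ) (hk : 1 ≤ k) {x : ℝ} (hx : x ≠ 0) : ∀ n : ℕ,
    tsPD n (L ++ [k]) x = (1 / x) * tsP n (L ++ [k - 1]) x := by
  induction L with
  | nil =>
    intro n
    simp only [List.nil_append]
    rw [tsPD, tsP, Finset.mul_sum]
    refine Finset.sum_congr rfl fun m hm => ?_
    have hm1 : 1 ≤ m := (Finset.mem_Icc.1 hm).1
    rw [show tsPD m [] x = ((2 * m - 1 : ℕ) : ℝ) * x ^ (2*m-2) from rfl,
      show tsP m [] x = x ^ (2*m-1) from rfl]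
    have hc : ((2 * m - 1 : ℕ) : ℝ) ≠ 0 := ne_of_gt (c2m_pos hm1)
    have hkk : k = (k-1) + 1 := by omega
    rw [hkk, Nat.add_sub_cancel, pow_succ, show 2*m-1 = (2*m-2)+1 from by omega, pow_succ]
    field_simp
  | cons k' rest ih =>
    intro n
    simp only [List.cons_append]
    rw [tsPD, tsP, Finset.mul_sum]
    refine Finset.sum_congr rfl fun m hm => ?_
    rw [ih m]
    ring

lemma geom_fin (x : ℝ) : ∀ n : ℕ, (1 - x^2) * ∑ m ∈ Finset.Icc 1 n, x ^ (2*m-2) = 1 - x^(2*n) := by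
  intro n
  induction n with
  | zero => simp
  | succ n ihn =>
    rw [Finset.sum_Icc_succ_top (by omega), mul_add, ihn]
    have h1 : 2*(n+1)-2 = 2*n := by omega
    have h2 : 2*(n+1) = 2*n + 2 := by omega
    rw [h1, h2]
    ring

lemma tsPD_one_geom (L : List ℕ) (x : ℝ) : ∀ n : ℕ, 1 ≤ n →
    (1 - x^2) * tsPD n (L ++ [1]) x = thsums n L - x * tsP n L x := by
  induction L with
  | nil =>
    intro n hn
    simp only [List.nil_append]
    rw [show thsums n [] = 1 from rfl, show tsP n [] x = x ^ (2*n-1) from rfl]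
    rw [tsPD]
    have : ∑ m ∈ Finset.Icc 1 n, (1 / ((2 * m - 1 : ℕ) : ℝ) ^ 1) * tsPD m [] x
        = ∑ m ∈ Finset.Icc 1 n, x ^ (2*m-2) := by
      refine Finset.sum_congr rfl fun m hm => ?_
      have hm1 : 1 ≤ m := (Finset.mem_Icc.1 hm).1
      rw [show tsPD m [] x = ((2 * m - 1 : ℕ) : ℝ) * x ^ (2*m-2) from rfl]
      have hc : ((2 * m - 1 : ℕ) : ℝ) ≠ 0 := ne_of_gt (c2m_pos hm1)
      rw [pow_one, one_div, inv_mul_eq_div, mul_comm (((2 * m - 1 : ℕ) : ℝ)) (x ^ (2*m-2)),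
        mul_div_assoc, div_self hc, mul_one]
    rw [this, geom_fin]
    have : x * x ^ (2*n-1) = x ^ (2*n) := by
      rw [← pow_succ']
      congr 1
      omega
    rw [this]
  | cons k rest ih =>
    intro n hn
    simp only [List.cons_append]
    rw [tsPD, tsP, thsums, Finset.mul_sum, Finset.mul_sum, ← Finset.sum_sub_distrib]
    refine Finset.sum_congr rfl fun m hm => ?_
    have hm1 : 1 ≤ m := (Finset.mem_Icc.1 hm).1
    rw [← mul_assoc, mul_comm (1 - x^2) (1 / ((2 * m - 1 : ℕ) : ℝ) ^ k), mul_assoc,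
      ih m hm1]
    ring
lemma sq_lt_one_of_abs {x : ℝ} (hx : |x| < 1) : x ^ 2 < 1 := by
  nlinarith [abs_nonneg x, sq_abs x]

lemma tplD_ksub (k : ℕ) (rest : List ℕ) {x : ℝ} (hx : x ≠ 0) :
    tplD (k :: rest) x = (1 / x) * tpl ((k - 1) :: rest) x := by
  rw [tplD_apply, tpl_apply, ← tsum_mul_left]
  refine tsum_congr fun m => ?_
  have hm1 : 1 ≤ (m:ℕ) := m.one_le
  have he : 2 * (m:ℕ) - 1 = (2 * (m:ℕ) - 2) + 1 := by omega
  rw [he, pow_succ]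
  field_simp

lemma tplD_one_nil {x : ℝ} (hx : |x| < 1) : tplD [1] x = 1 / (1 - x ^ 2) := by
  rw [tplD_apply]
  have h1 : ∀ m : ℕ+, (x : ℝ) ^ (2 * (m:ℕ) - 2) / ((2 * (m:ℕ) - 1 : ℕ) : ℝ) ^ (1 - 1) *
      thsum ((m:ℕ) - 1) [] = x ^ (2 * (m:ℕ) - 2) := by
    intro m; simp [thsum]
  calc (∑' m : ℕ+, x ^ (2 * (m:ℕ) - 2) / ((2 * (m:ℕ) - 1 : ℕ) : ℝ) ^ (1 - 1) *
          thsum ((m:ℕ) - 1) [])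
      = ∑' m : ℕ+, x ^ (2 * (m:ℕ) - 2) := tsum_congr h1
    _ = ∑' j : ℕ, x ^ (2 * ((j.succPNat : ℕ)) - 2) := tsum_pnat_eq _
    _ = ∑' j : ℕ, (x ^ 2) ^ j := by
        refine tsum_congr fun j => ?_
        rw [show (j.succPNat : ℕ) = j + 1 from rfl, show 2 * (j+1) - 2 = 2 * j from by omega,
          pow_mul]
    _ = (1 - x ^ 2)⁻¹ := tsum_geometric_of_lt_one (by positivity) (sq_lt_one_of_abs hx)
    _ = 1 / (1 - x ^ 2) := (one_div _).symm

lemma thsum_zero_of_nonnil (k : ℕ) (r : List ℕ) : thsum 0 (k :: r) = 0 := by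
  rw [thsum]; simp

lemma tplD_one_cons (k : ℕ) (r : List ℕ) {x : ℝ} (hx : |x| < 1) :
    tplD (1 :: k :: r) x = x / (1 - x ^ 2) * tpl (k :: r) x := by
  by_cases hx0 : x = 0
  · subst hx0
    rw [tplD_apply]
    have h0 : ∀ m : ℕ+, (0:ℝ) ^ (2 * (m:ℕ) - 2) / ((2 * (m:ℕ) - 1 : ℕ) : ℝ) ^ (1 - 1) *
        thsum ((m:ℕ) - 1) (k :: r) = 0 := by
      intro m
      have hm1 : 1 ≤ (m:ℕ) := m.one_le
      by_cases h : (m:ℕ) = 1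
      · rw [show ((m:ℕ) - 1) = 0 from by omega, thsum_zero_of_nonnil, mul_zero]
      · rw [zero_pow (show 2 * (m:ℕ) - 2 ≠ 0 from by omega), zero_div, zero_mul]
    rw [tsum_congr h0, tsum_zero]
    simp
  -- x ≠ 0
  have hax : 0 < |x| := abs_pos.2 hx0
  have hx2 : x ^ 2 < 1 := sq_lt_one_of_abs hx
  have hx2' : (0:ℝ) ≤ x ^ 2 := by positivity
  have h1x2 : (1:ℝ) - x ^ 2 ≠ 0 := by nlinarith
  set d := r.length with hd
  set gn : ℕ → ℝ := fun i => (1 / ((2 * i - 1 : ℕ) : ℝ) ^ k) * thsum (i - 1) r with hgn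
  have hgn_nonneg : ∀ i, 0 ≤ gn i := fun i => mul_nonneg (by positivity) (thsum_nonneg _ _)
  have hgn_le : ∀ i : ℕ, 1 ≤ i → gn i ≤ ((i:ℝ)) ^ d := by
    intro i hi
    calc gn i ≤ 1 * thsum (i - 1) r :=
          mul_le_mul_of_nonneg_right (inv_c2m_le_one hi) (thsum_nonneg _ _)
      _ = thsum (i - 1) r := one_mul _
      _ ≤ (((i - 1 : ℕ):ℝ) + 1) ^ d := thsum_le r (i - 1)
      _ = ((i:ℝ)) ^ d := by rw [show (((i-1:ℕ)):ℝ) + 1 = (i:ℝ) from by push_cast [hi]; ring]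
  set K : ℕ → ℕ → ℝ := fun a i => if i ∈ Finset.Icc 1 a then x ^ (2 * a) * gn i else 0 with hK
  have hK_nonneg : ∀ a i, 0 ≤ K a i := by
    intro a i
    simp only [hK]
    split
    · exact mul_nonneg (by rw [pow_mul]; positivity) (hgn_nonneg i)
    · exact le_refl 0
  have hrow_eq : ∀ a : ℕ, ∑' i : ℕ, K a i = x ^ (2 * a) * thsum a (k :: r) := by
    intro a
    rw [tsum_eq_sum (s := Finset.Icc 1 a) (fun i hi => by simp only [hK]; simp [hi]), thsum,
      Finset.mul_sum]
    refine Finset.sum_congr rfl fun i hi => ?_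
    simp only [hK]; simp only [hi, if_true]; rfl
  have hrow_summable : ∀ a : ℕ, Summable (K a) := fun a =>
    summable_of_ne_finset_zero (s := Finset.Icc 1 a) (fun i hi => by simp only [hK]; simp [hi])
  have hrowsum_summable : Summable (fun a : ℕ => x ^ (2*a) * thsum a (k :: r)) := by
    refine Summable.of_nonneg_of_le
      (fun a => mul_nonneg (by rw [pow_mul]; positivity) (thsum_nonneg _ _))
      (fun a => ?_) (summable_aux (d+1) hax hx)
    calc x ^ (2*a) * thsum a (k :: r) ≤ x ^ (2*a) * ((a:ℝ)+1) ^ (d+1) := by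
          apply mul_le_mul_of_nonneg_left ?_ (by rw [pow_mul]; positivity)
          simpa using thsum_le (k :: r) a
      _ ≤ ((a:ℝ)+1) ^ (d+1) * |x| ^ (2*a) := by
          rw [mul_comm]
          apply mul_le_mul_of_nonneg_left ?_ (by positivity)
          rw [pow_mul, pow_mul, ← sq_abs]
      _ = ((a:ℝ)+1) ^ (d+1) * |x| ^ (2*a) := rfl
  have hcol_summable : ∀ i : ℕ, Summable (fun a => K a i) := by
    intro i
    refine Summable.of_nonneg_of_le (fun a => hK_nonneg a i) (fun a => ?_)
      (((summable_geometric_of_lt_one hx2' hx2)).mul_left (gn i))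
    simp only [hK]
    split
    · rw [mul_comm, pow_mul]
    · exact mul_nonneg (hgn_nonneg i) (by positivity)
  have hunc : Summable (Function.uncurry K) := by
    refine (summable_prod_of_nonneg ?_).2 ⟨?_, ?_⟩
    · intro p; exact hK_nonneg p.1 p.2
    · exact hrow_summable
    · refine hrowsum_summable.congr fun a => ?_
      exact (hrow_eq a).symm
  have hswap : ∑' a : ℕ, ∑' i : ℕ, K a i = ∑' i : ℕ, ∑' a : ℕ, K a i :=
    (Summable.tsum_comm' hunc hrow_summable hcol_summable).symm
  -- compute column sums
  have hcol_eq : ∀ i : ℕ, ∑' a : ℕ, K a i =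
      (if 1 ≤ i then gn i * x ^ (2*i) * (1 - x^2)⁻¹ else 0) := by
    intro i
    by_cases hi : 1 ≤ i
    · simp only [hi, if_true]
      have h1 : ∑ a ∈ Finset.range i, K a i = 0 := by
        refine Finset.sum_eq_zero fun a ha => ?_
        simp only [hK]
        have : ¬ (i ∈ Finset.Icc 1 a) := by
          simp only [Finset.mem_Icc, not_and_or, not_le]
          right; exact Finset.mem_range.1 ha
        simp [this]
      have h2 := Summable.sum_add_tsum_nat_add (f := fun a => K a i) i (hcol_summable i)
      rw [h1, zero_add] at h2
      rw [← h2]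
      have h3 : ∀ b : ℕ, K (b + i) i = gn i * x ^ (2*i) * (x^2) ^ b := by
        intro b
        simp only [hK]
        have : i ∈ Finset.Icc 1 (b + i) := Finset.mem_Icc.2 ⟨hi, by omega⟩
        simp only [this, if_true]
        rw [show 2 * (b + i) = 2*b + 2*i from by ring, pow_add, pow_mul]
        ring
      rw [tsum_congr h3, tsum_mul_left, tsum_geometric_of_lt_one hx2' hx2]
    · simp only [hi, if_false]
      have : ∀ a : ℕ, K a i = 0 := by
        intro a
        simp only [hK]
        have : ¬ (i ∈ Finset.Icc 1 a) := by
          simp only [Finset.mem_Icc, not_and_or, not_le]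
          left; omega
        simp [this]
      rw [tsum_congr this, tsum_zero]
  -- assemble
  have hLHS : tplD (1 :: k :: r) x = ∑' a : ℕ, ∑' i : ℕ, K a i := by
    rw [tplD_apply, tsum_pnat_eq]
    refine tsum_congr fun a => ?_
    rw [hrow_eq a, show ((a.succPNat : ℕ)) = a + 1 from rfl,
      show 2 * (a+1) - 2 = 2 * a from by omega, show (a + 1) - 1 = a from by omega,
      pow_zero, div_one]
  rw [hLHS, hswap, tsum_congr hcol_eq]
  -- shift the index
  have hcolsum_summable : Summable (fun i : ℕ =>
      (if 1 ≤ i then gn i * x ^ (2*i) * (1 - x^2)⁻¹ else 0)) := by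
    have h1 : Summable (fun p : ℕ × ℕ => K p.2 p.1) := hunc.prod_symm
    have h2 := ((summable_prod_of_nonneg (fun p : ℕ × ℕ => hK_nonneg p.2 p.1)).1 h1).2
    exact h2.congr hcol_eq
  have hshift := Summable.sum_add_tsum_nat_add (f := fun i =>
      (if 1 ≤ i then gn i * x ^ (2*i) * (1 - x^2)⁻¹ else 0)) 1 hcolsum_summable
  rw [Finset.sum_range_one] at hshift
  simp only [show ¬ ((1:ℕ) ≤ 0) from by omega, if_false, zero_add] at hshift
  rw [← hshift]
  rw [tpl_apply, tsum_pnat_eq, ← tsum_mul_left]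
  refine tsum_congr fun j => ?_
  rw [if_pos (by omega : 1 ≤ j + 1)]
  simp only [hgn]
  rw [show ((j.succPNat : ℕ)) = j + 1 from rfl,
    show 2 * (j+1) - 1 = 2*j + 1 from by omega, show (j+1) - 1 = j from by omega,
    show 2 * (j+1) = 2*j + 2 from by omega]
  have hx21 : (x:ℝ) ^ (2*j+2) = x ^ (2*j+1) * x := by rw [← pow_succ]
  rw [hx21]
  have hcc : ((2*j+1 : ℕ) : ℝ) ≠ 0 := by
    have : (0:ℕ) < 2*j+1 := by omega
    exact_mod_cast this.ne'
  field_simp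
lemma continuousOn_sum_aux {ι : Type*} {s : Finset ι} {f : ι → ℝ → ℝ} {t : Set ℝ}
    (h : ∀ i ∈ s, ContinuousOn (f i) t) :
    ContinuousOn (fun y => ∑ i ∈ s, f i y) t := by
  classical
  induction s using Finset.induction_on with
  | empty => simpa using continuousOn_const
  | insert a s' ha ih =>
    simp only [Finset.sum_insert ha]
    exact (h a (Finset.mem_insert_self _ _)).add
      (ih fun i hi => h i (Finset.mem_insert_of_mem hi))

lemma abs_le_of_mem_uIcc {x y : ℝ} (hy : y ∈ Set.uIcc 0 x) : |y| ≤ |x| := by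
  rw [Set.mem_uIcc] at hy
  have h1 := le_abs_self x
  have h2 := neg_abs_le x
  rcases hy with ⟨h3, h4⟩ | ⟨h3, h4⟩ <;> rw [abs_le] <;> constructor <;> linarith

lemma drop_reverse_ne_nil {ms : List ℕ} {j : ℕ} (hj : j ∈ Finset.Icc 1 ms.length) :
    (ms.drop (j-1)).reverse ≠ [] := by
  have hj' := Finset.mem_Icc.1 hj
  simp only [ne_eq, List.reverse_eq_nil_iff]
  intro h
  have := List.drop_eq_nil_iff.1 h
  omega

lemma head_mem_of_drop {ms : List ℕ} {j : ℕ} (hj : j ∈ Finset.Icc 1 ms.length)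
    {hd : ℕ} {tl : List ℕ} (h : (ms.drop (j-1)).reverse = hd :: tl) : hd ∈ ms := by
  have : hd ∈ (ms.drop (j-1)).reverse := by rw [h]; exact List.mem_cons_self
  rw [List.mem_reverse] at this
  exact List.drop_subset _ _ this

lemma hasDerivAt_Fms (n : ℕ) (ms : List ℕ) (hm : ∀ m ∈ ms, 1 ≤ m) {x : ℝ} (hx : |x| < 1) :
    HasDerivAt (Fms n ms) (Gms n ms x) x := by
  have hsum : HasDerivAt
      (fun y => ∑ j ∈ Finset.Icc 1 ms.length,
        (-1 : ℝ) ^ (j - 1) * thsums n (ms.take (j - 1)) * tpl ((ms.drop (j - 1)).reverse) y)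
      (∑ j ∈ Finset.Icc 1 ms.length,
        (-1 : ℝ) ^ (j - 1) * thsums n (ms.take (j - 1)) * tplD ((ms.drop (j - 1)).reverse) x)
      x := by
    refine HasDerivAt.fun_sum fun j hj => ?_
    rcases hrev : (ms.drop (j-1)).reverse with _ | ⟨hd, tl⟩
    · exact absurd hrev (drop_reverse_ne_nil hj)
    · have hhd : 1 ≤ hd := hm hd (head_mem_of_drop hj hrev)
      exact (hasDerivAt_tpl hd hhd tl hx).const_mul _
  have htsp := (hasDerivAt_tsP ms n x).const_mul ((-1 : ℝ) ^ ms.length)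
  have := hsum.fun_add htsp
  exact this

lemma continuousOn_Gms (n : ℕ) (ms : List ℕ) {x : ℝ} (hx : |x| < 1) :
    ContinuousOn (Gms n ms) (Set.uIcc 0 x) := by
  set r : ℝ := (1 + |x|) / 2 with hr
  have h0 : 0 < r := by positivity
  have h1 : r < 1 := by rw [hr]; linarith
  have hsub : Set.uIcc 0 x ⊆ {y : ℝ | |y| ≤ r} := by
    intro y hy
    have := abs_le_of_mem_uIcc hy
    simp only [Set.mem_setOf_eq]
    rw [hr]; linarith [abs_nonneg x]
  have : ContinuousOn (fun y => Gms n ms y) (Set.uIcc 0 x) := by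
    unfold Gms
    refine ContinuousOn.add (continuousOn_sum_aux fun j hj => ?_) ?_
    · rcases hrev : (ms.drop (j-1)).reverse with _ | ⟨hd, tl⟩
      · exact absurd hrev (drop_reverse_ne_nil hj)
      · exact continuousOn_const.mul ((continuousOn_tplD hd tl h0 h1).mono hsub)
    · exact continuousOn_const.mul (continuous_tsPD ms n).continuousOn
  exact this

lemma tpl_zero (k : ℕ) (rest : List ℕ) : tpl (k :: rest) 0 = 0 := by
  rw [tpl_apply]
  have h : ∀ m : ℕ+, (0:ℝ) ^ (2 * (m:ℕ) - 1) / ((2 * (m:ℕ) - 1 : ℕ) : ℝ) ^ k *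
      thsum ((m:ℕ) - 1) rest = 0 := by
    intro m
    have hm1 : 1 ≤ (m:ℕ) := m.one_le
    rw [zero_pow (show 2 * (m:ℕ) - 1 ≠ 0 from by omega), zero_div, zero_mul]
  rw [tsum_congr h, tsum_zero]

lemma Fms_zero (n : ℕ) (hn : 1 ≤ n) (ms : List ℕ) : Fms n ms 0 = 0 := by
  unfold Fms
  rw [tsP_zero ms n hn, mul_zero, add_zero]
  refine Finset.sum_eq_zero fun j hj => ?_
  rcases hrev : (ms.drop (j-1)).reverse with _ | ⟨hd, tl⟩
  · exact absurd hrev (drop_reverse_ne_nil hj)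
  · rw [tpl_zero, mul_zero]

lemma integral_Gms (n : ℕ) (hn : 1 ≤ n) (ms : List ℕ) (hm : ∀ m ∈ ms, 1 ≤ m)
    {x : ℝ} (hx : |x| < 1) :
    ∫ t in (0:ℝ)..x, Gms n ms t = Fms n ms x := by
  have h := intervalIntegral.integral_eq_sub_of_hasDerivAt
    (f := Fms n ms) (f' := Gms n ms) (a := (0:ℝ)) (b := x)
    (fun t ht => hasDerivAt_Fms n ms hm (lt_of_le_of_lt (abs_le_of_mem_uIcc ht) hx))
    ((continuousOn_Gms n ms hx).intervalIntegrable)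
  rw [h, Fms_zero n hn ms, sub_zero]
lemma Gms_eq_base (n : ℕ) (hn : 1 ≤ n) {x : ℝ} (hx : |x| < 1) :
    Gms n [1] x = x ^ (2*n) / (1 - x^2) := by
  have h1x2 : (1:ℝ) - x ^ 2 ≠ 0 := by
    have := sq_lt_one_of_abs hx; nlinarith
  unfold Gms
  rw [show ([1] : List ℕ).length = 1 from rfl, Finset.Icc_self, Finset.sum_singleton]
  simp only [Nat.sub_self, List.take_zero, List.drop_zero, List.reverse_cons,
    List.reverse_nil, List.nil_append, pow_zero, one_mul, pow_one]
  rw [show thsums n [] = 1 from rfl, tplD_one_nil hx]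
  have htspd : tsPD n [1] x = ∑ m ∈ Finset.Icc 1 n, x ^ (2*m-2) := by
    rw [tsPD]
    refine Finset.sum_congr rfl fun m hm => ?_
    have hm1 : 1 ≤ m := (Finset.mem_Icc.1 hm).1
    rw [show tsPD m [] x = ((2 * m - 1 : ℕ) : ℝ) * x ^ (2*m-2) from rfl]
    have hc : ((2 * m - 1 : ℕ) : ℝ) ≠ 0 := ne_of_gt (c2m_pos hm1)
    rw [pow_one, one_div, inv_mul_eq_div, mul_comm (((2 * m - 1 : ℕ) : ℝ)) (x ^ (2*m-2)),
      mul_div_assoc, div_self hc, mul_one]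
  rw [htspd]
  have hgeom := geom_fin x n
  have : ∑ m ∈ Finset.Icc 1 n, x ^ (2*m-2) = (1 - x^(2*n)) / (1 - x^2) := by
    rw [eq_div_iff h1x2, mul_comm, hgeom]
  rw [this]
  field_simp
  ring

lemma Gms_eq_ksub (n : ℕ) (L : List ℕ) (k : ℕ) (hk : 1 ≤ k) {x : ℝ} (hx : x ≠ 0) :
    Gms n (L ++ [k]) x = (1/x) * Fms n (L ++ [k-1]) x := by
  unfold Gms Fms
  rw [mul_add, Finset.mul_sum]
  have hlen : (L ++ [k]).length = (L ++ [k-1]).length := by simp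
  rw [hlen]
  congr 1
  · refine Finset.sum_congr rfl fun j hj => ?_
    have hj' := Finset.mem_Icc.1 hj
    have hj1 : j - 1 ≤ L.length := by simp at hj'; omega
    rw [List.take_append_of_le_length hj1, List.take_append_of_le_length hj1,
      List.drop_append_of_le_length hj1, List.drop_append_of_le_length hj1,
      List.reverse_append, List.reverse_append]
    simp only [List.reverse_cons, List.reverse_nil, List.nil_append, List.singleton_append]
    rw [tplD_ksub k _ hx]
    ring
  · rw [tsPD_ksub L k hk hx]
    ring
lemma Gms_eq_drop (n : ℕ) (hn : 1 ≤ n) (L : List ℕ) (hL : L ≠ []) {x : ℝ} (hx : |x| < 1) :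
    Gms n (L ++ [1]) x = x / (1 - x^2) * Fms n L x := by
  have h1x2 : (1:ℝ) - x ^ 2 ≠ 0 := by
    have := sq_lt_one_of_abs hx; nlinarith
  have hLlen : 1 ≤ L.length := by
    cases L with
    | nil => exact absurd rfl hL
    | cons a l => simp
  unfold Gms Fms
  have hlen : (L ++ [1]).length = L.length + 1 := by simp
  rw [hlen, Finset.sum_Icc_succ_top (by omega : 1 ≤ L.length + 1)]
  -- the first L.length terms
  have hmain : ∑ j ∈ Finset.Icc 1 L.length,
      (-1 : ℝ) ^ (j - 1) * thsums n ((L ++ [1]).take (j - 1)) *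
        tplD (((L ++ [1]).drop (j - 1)).reverse) x
      = x / (1 - x^2) * ∑ j ∈ Finset.Icc 1 L.length,
        (-1 : ℝ) ^ (j - 1) * thsums n (L.take (j - 1)) * tpl ((L.drop (j - 1)).reverse) x := by
    rw [Finset.mul_sum]
    refine Finset.sum_congr rfl fun j hj => ?_
    have hj' := Finset.mem_Icc.1 hj
    have hj1 : j - 1 ≤ L.length := by omega
    have hj2 : j - 1 < L.length := by omega
    rw [List.take_append_of_le_length hj1, List.drop_append_of_le_length hj1,
      List.reverse_append]
    simp only [List.reverse_cons, List.reverse_nil, List.nil_append, List.singleton_append]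
    have hne : (L.drop (j-1)).reverse ≠ [] := by
      simp only [ne_eq, List.reverse_eq_nil_iff]
      intro h
      have := List.drop_eq_nil_iff.1 h
      omega
    rcases hrev : (L.drop (j-1)).reverse with _ | ⟨hd, tl⟩
    · exact absurd hrev hne
    · rw [tplD_one_cons hd tl hx]
      ring
  rw [hmain]
  -- the top term and the tsPD term
  have htop : (L ++ [1]).take (L.length + 1 - 1) = L := by
    rw [show L.length + 1 - 1 = L.length from by omega,
      List.take_append_of_le_length (le_refl _), List.take_length]
  have hdrop : ((L ++ [1]).drop (L.length + 1 - 1)).reverse = [1] := by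
    rw [show L.length + 1 - 1 = L.length from by omega,
      List.drop_append_of_le_length (le_refl _), List.drop_length]
    rfl
  rw [htop, hdrop, tplD_one_nil hx]
  have htspd : tsPD n (L ++ [1]) x = (thsums n L - x * tsP n L x) / (1 - x^2) := by
    rw [eq_div_iff h1x2, mul_comm, tsPD_one_geom L x n hn]
  rw [htspd]
  rw [show L.length + 1 - 1 = L.length from by omega, pow_succ]
  field_simp
  ring
noncomputable def forms (n : ℕ) (ms : List ℕ) : List (ℝ → ℝ) :=
  (fun t : ℝ => t ^ (2 * n - 1)) ::
    ((fun t : ℝ => 1 / (1 - t ^ 2)) ::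
        List.replicate (ms.headI - 1) (fun t : ℝ => 1 / t) ++
      (ms.tail.map (fun m =>
        (fun t : ℝ => t / (1 - t ^ 2)) ::
          List.replicate (m - 1) (fun t : ℝ => 1 / t))).flatten)

lemma forms_base (n : ℕ) :
    forms n [1] = [fun t : ℝ => t ^ (2 * n - 1), fun t : ℝ => 1 / (1 - t ^ 2)] := by
  simp [forms]

lemma forms_ksub (n : ℕ) (L : List ℕ) (k : ℕ) (hk : 2 ≤ k) :
    forms n (L ++ [k]) = forms n (L ++ [k - 1]) ++ [fun t : ℝ => 1 / t] := by
  have hrep : List.replicate (k - 1) (fun t : ℝ => 1 / t) =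
      List.replicate (k - 1 - 1) (fun t : ℝ => 1 / t) ++ [fun t : ℝ => 1 / t] := by
    rw [← List.replicate_succ' (n := k - 1 - 1)]
    congr 1
    omega
  cases L with
  | nil =>
    simp only [forms, List.nil_append, List.headI, List.tail]
    rw [hrep]
    simp
  | cons a l =>
    simp only [forms, List.cons_append, List.headI, List.tail, List.map_append,
      List.flatten_append, List.map_cons, List.map_nil, List.flatten_cons, List.flatten_nil]
    rw [hrep]
    simp

lemma forms_drop (n : ℕ) (L : List ℕ) (hL : L ≠ []) :
    forms n (L ++ [1]) = forms n L ++ [fun t : ℝ => t / (1 - t ^ 2)] := by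
  cases L with
  | nil => exact absurd rfl hL
  | cons a l =>
    simp only [forms, List.cons_append, List.headI, List.tail, List.map_append,
      List.flatten_append, List.map_cons, List.map_nil, List.flatten_cons, List.flatten_nil]
    simp
lemma abs_le_abs_of_uIoc {x t : ℝ} (h : t ∈ Set.uIoc 0 x) : |t| ≤ |x| := by
  rw [Set.mem_uIoc] at h
  have h1 := le_abs_self x
  have h2 := neg_abs_le x
  rcases h with ⟨h3, h4⟩ | ⟨h3, h4⟩ <;> rw [abs_le] <;> constructor <;> linarith

lemma ae_ne_zero : ∀ᵐ (t : ℝ), t ≠ 0 := by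
  rw [MeasureTheory.ae_iff]
  have h : {a : ℝ | ¬ a ≠ 0} = {(0:ℝ)} := by ext a; simp
  rw [h]
  exact Real.volume_singleton

lemma main_lemma_s9 : ∀ (w : ℕ) (ms : List ℕ), ms.sum = w → ms ≠ [] → (∀ m ∈ ms, 1 ≤ m) →
    ∀ (n : ℕ), 1 ≤ n → ∀ (x : ℝ), |x| < 1 →
    Fms n ms x = (2 * n : ℝ) * itInt (forms n ms).reverse x := by
  intro w
  induction w using Nat.strong_induction_on with
  | _ w IH =>
    intro ms hsum hne hpos n hn x hx
    rcases List.eq_nil_or_concat ms with h | ⟨L, k, hLk⟩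
    · exact absurd h hne
    rw [List.concat_eq_append] at hLk
    subst hLk
    have hk1 : 1 ≤ k := hpos k (by simp)
    have hsums : L.sum + k = w := by simpa using hsum
    by_cases hk2 : 2 ≤ k
    · -- decrement the last exponent
      have hw1 : w - 1 < w := by omega
      have hpos' : ∀ m ∈ L ++ [k-1], 1 ≤ m := by
        intro m hm
        rcases List.mem_append.1 hm with h | h
        · exact hpos m (List.mem_append_left _ h)
        · simp at h; omega
      have hIH := IH (w - 1) hw1 (L ++ [k-1]) (by simp; omega) (by simp) hpos' n hn
      rw [(integral_Gms n hn (L ++ [k]) hpos hx).symm]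
      have hcong : ∫ t in (0:ℝ)..x, Gms n (L ++ [k]) t =
          ∫ t in (0:ℝ)..x, (2*n:ℝ) * (itInt (forms n (L ++ [k-1])).reverse t * (1/t)) := by
        refine intervalIntegral.integral_congr_ae ?_
        filter_upwards [ae_ne_zero] with t ht0 htm
        have hxt : |t| < 1 := (abs_le_abs_of_uIoc htm).trans_lt hx
        rw [Gms_eq_ksub n L k hk1 ht0, hIH t hxt]
        ring
      rw [hcong, intervalIntegral.integral_const_mul]
      congr 1
      rw [forms_ksub n L k hk2, List.reverse_append]
      simp only [List.reverse_cons, List.reverse_nil, List.nil_append, List.singleton_append]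
      rw [show itInt ((fun t : ℝ => 1/t) :: (forms n (L ++ [k-1])).reverse) x
        = ∫ t in (0:ℝ)..x, itInt (forms n (L ++ [k-1])).reverse t * (1/t) from rfl]
    · have hk : k = 1 := by omega
      subst hk
      by_cases hL : L = []
      · -- base case ms = [1]
        subst hL
        simp only [List.nil_append]
        rw [(integral_Gms n hn [1] hpos hx).symm]
        have hcong : ∫ t in (0:ℝ)..x, Gms n [1] t =
            ∫ t in (0:ℝ)..x, (2*n:ℝ) * ((t ^ (2*n) / (2*n)) * (1 / (1 - t^2))) := by
          refine intervalIntegral.integral_congr fun t ht => ?_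
          have hxt : |t| < 1 := (abs_le_of_mem_uIcc ht).trans_lt hx
          rw [Gms_eq_base n hn hxt]
          have h2n : (2*(n:ℝ)) ≠ 0 := by
            have : (0:ℝ) < (n:ℝ) := by exact_mod_cast hn
            positivity
          have h1t2 : (1:ℝ) - t ^ 2 ≠ 0 := by
            have := sq_lt_one_of_abs hxt; nlinarith
          field_simp
        rw [hcong, intervalIntegral.integral_const_mul]
        congr 1
        rw [forms_base]
        rw [show ([fun t : ℝ => t ^ (2 * n - 1), fun t : ℝ => 1 / (1 - t ^ 2)]).reverse
          = [fun t : ℝ => 1 / (1 - t ^ 2), fun t : ℝ => t ^ (2 * n - 1)] from by simp]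
        rw [show itInt [fun t : ℝ => 1 / (1 - t ^ 2), fun t : ℝ => t ^ (2 * n - 1)] x
          = ∫ t in (0:ℝ)..x, itInt [fun t : ℝ => t ^ (2 * n - 1)] t * (1 / (1 - t^2)) from rfl]
        refine intervalIntegral.integral_congr fun t ht => ?_
        have hi : itInt [fun t : ℝ => t ^ (2 * n - 1)] t = t ^ (2*n) / (2*n) := by
          rw [show itInt [fun t : ℝ => t ^ (2 * n - 1)] t
            = ∫ s in (0:ℝ)..t, itInt [] s * s ^ (2 * n - 1) from rfl]
          simp only [itInt, one_mul]
          rw [integral_pow]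
          rw [show 2*n - 1 + 1 = 2*n from by omega]
          rw [zero_pow (show 2*n ≠ 0 from by omega), sub_zero]
          congr 1
          push_cast [Nat.cast_sub (show 1 ≤ 2*n from by omega)]
          ring
        rw [hi]
      · -- drop the last entry (= 1)
        have hw1 : w - 1 < w := by omega
        have hpos' : ∀ m ∈ L, 1 ≤ m := fun m hm => hpos m (List.mem_append_left _ hm)
        have hIH := IH (w - 1) hw1 L (by omega) hL hpos' n hn
        rw [(integral_Gms n hn (L ++ [1]) hpos hx).symm]
        have hcong : ∫ t in (0:ℝ)..x, Gms n (L ++ [1]) t =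
            ∫ t in (0:ℝ)..x, (2*n:ℝ) *
              (itInt (forms n L).reverse t * (t / (1 - t^2))) := by
          refine intervalIntegral.integral_congr fun t ht => ?_
          have hxt : |t| < 1 := (abs_le_of_mem_uIcc ht).trans_lt hx
          rw [Gms_eq_drop n hn L hL hxt, hIH t hxt]
          ring
        rw [hcong, intervalIntegral.integral_const_mul]
        congr 1
        rw [forms_drop n L hL, List.reverse_append]
        simp only [List.reverse_cons, List.reverse_nil, List.nil_append, List.singleton_append]
        rw [show itInt ((fun t : ℝ => t / (1 - t^2)) :: (forms n L).reverse) x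
          = ∫ t in (0:ℝ)..x, itInt (forms n L).reverse t * (t / (1 - t^2)) from rfl]

theorem stmt9 (ms : List ℕ) (hms : ms ≠ []) (hmpos : ∀ m ∈ ms, 1 ≤ m)
    (n : ℕ) (hn : 1 ≤ n) (x : ℝ) (hx : |x| < 1) :
    ∑ j ∈ Finset.Icc 1 ms.length,
        (-1 : ℝ) ^ (j - 1) * thsums n (ms.take (j - 1)) * tpl ((ms.drop (j - 1)).reverse) x +
      (-1 : ℝ) ^ ms.length *
        tstarP n (ms.zip (List.replicate (ms.length - 1) (1 : ℝ) ++ [x])) =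
      (2 * n : ℝ) * itInt
        (((fun t : ℝ => t ^ (2 * n - 1)) ::
          ((fun t : ℝ => 1 / (1 - t ^ 2)) ::
              List.replicate (ms.headI - 1) (fun t : ℝ => 1 / t) ++
            (ms.tail.map (fun m =>
              (fun t : ℝ => t / (1 - t ^ 2)) ::
                List.replicate (m - 1) (fun t : ℝ => 1 / t))).flatten)).reverse) x := by
  rcases ms with _ | ⟨k, L⟩
  · exact absurd rfl hms
  rw [tsP_eq_tstarP L k x n]
  exact main_lemma_s9 ((k :: L).sum) (k :: L) rfl (by simp) hmpos n hn x hx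
end
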